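/- arXiv:2411.03264 — 5 statements merged into one kernel-verified Lean document; each statement's English description precedes it below -/
import Mathlib

section
/- Let X be a Hilbert space, I_n an interval of length τ_n, and let V be a piecewise polynomial of degree p ≥ 2 in time with values in X on I_n. Define the reconstruction V̂ on I_n as the polynomial of degree p+1 satisfying (V̂'', q)_{L²(I_n;X)} = (V'', q)_{L²(I_n;X)} + (J, q(t_{n-1}))_X for all polynomials q of degree ≤ p-1 with values in X, together with V̂(t_{n-1}) = V(t_{n-1}) and V̂'(t_{n-1}) = V'(t_{n-1}) - J (where J denotes the jump of V' at t_{n-1}). Then V̂'(t_n) = V'(t_n) and V̂(t_n) = V(t_n); that is, the reconstruction matches the value and derivative of V at the right endpoint. -/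
open MeasureTheory

/-- `f : ℝ → X` is a polynomial of degree at most `p` with values in `X`. -/
def IsPolyDeg {X : Type*} [AddCommMonoid X] [Module ℝ X] (p : ℕ) (f : ℝ → X) : Prop :=
  ∃ c : ℕ → X, ∀ t : ℝ, f t = ∑ k ∈ Finset.range (p + 1), t ^ k • c k

section Aux

variable {X : Type} [NormedAddCommGroup X] [NormedSpace ℝ X]

lemma polyAux1 (c : ℕ → X) (n : ℕ) (t : ℝ) :
    HasDerivAt (fun s : ℝ => ∑ k ∈ Finset.range n, s ^ k • c k)
      (∑ k ∈ Finset.range n, ((k : ℝ) * t ^ (k - 1)) • c k) t := by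
  apply HasDerivAt.fun_sum
  intro k _
  exact (hasDerivAt_pow k t).smul_const (c k)

lemma polyAux2 (c : ℕ → X) (n : ℕ) (t : ℝ) :
    HasDerivAt (fun s : ℝ => ∑ k ∈ Finset.range n, ((k : ℝ) * s ^ (k - 1)) • c k)
      (∑ k ∈ Finset.range n, ((k : ℝ) * ((k - 1 : ℕ) : ℝ) * t ^ (k - 2)) • c k) t := by
  apply HasDerivAt.fun_sum
  intro k _
  have h := ((hasDerivAt_pow (k - 1) t).const_mul ((k : ℝ))).smul_const (c k)
  have e : k - 1 - 1 = k - 2 := by omega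
  rw [e] at h
  rwa [← mul_assoc] at h

lemma polyCont2 (c : ℕ → X) (n : ℕ) :
    Continuous (fun t : ℝ => ∑ k ∈ Finset.range n, ((k : ℝ) * ((k - 1 : ℕ) : ℝ) * t ^ (k - 2)) • c k) := by
  apply continuous_finset_sum
  intro k _
  exact (Continuous.mul continuous_const (continuous_pow _)).smul continuous_const

end Aux

/-- The C¹ reconstruction matches the value and derivative of `V` at the right endpoint. -/
theorem reconstruction_matches_right_endpoint
    {X : Type} [NormedAddCommGroup X] [InnerProductSpace ℝ X] [CompleteSpace X]
    (p : ℕ) (a b : ℝ) (hab : a < b)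
    (V V' V'' Vh Vh' Vh'' : ℝ → X) (J : X)
    (hVpoly : IsPolyDeg p V) (hVhpoly : IsPolyDeg (p + 1) Vh)
    (hV' : ∀ t, HasDerivAt V (V' t) t) (hV'' : ∀ t, HasDerivAt V' (V'' t) t)
    (hVh' : ∀ t, HasDerivAt Vh (Vh' t) t) (hVh'' : ∀ t, HasDerivAt Vh' (Vh'' t) t)
    (hmom : ∀ q : ℝ → X, IsPolyDeg (p - 1) q →
      ∫ t in Set.Ioc a b, (inner ℝ (Vh'' t) (q t) : ℝ)
        = (∫ t in Set.Ioc a b, (inner ℝ (V'' t) (q t) : ℝ)) + (inner ℝ J (q a) : ℝ))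
    (hinit : Vh a = V a) (hinit' : Vh' a = V' a - J)
    (hp : 2 ≤ p) :
    Vh' b = V' b ∧ Vh b = V b := by
  classical
  -- continuity of second derivatives
  have contOf : ∀ (n : ℕ) (g g' g'' : ℝ → X), IsPolyDeg n g →
      (∀ t, HasDerivAt g (g' t) t) → (∀ t, HasDerivAt g' (g'' t) t) → Continuous g'' := by
    intro n g g' g'' ⟨c, hc⟩ hg' hg''
    have hgeq : g = fun s => ∑ k ∈ Finset.range (n + 1), s ^ k • c k := funext hc
    have hg'eq : g' = fun t => ∑ k ∈ Finset.range (n + 1), ((k : ℝ) * t ^ (k - 1)) • c k := by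
      funext t
      exact (hg' t).unique (hgeq ▸ polyAux1 c (n + 1) t)
    have hg''eq : g'' = fun t =>
        ∑ k ∈ Finset.range (n + 1), ((k : ℝ) * ((k - 1 : ℕ) : ℝ) * t ^ (k - 2)) • c k := by
      funext t
      exact (hg'' t).unique (hg'eq ▸ polyAux2 c (n + 1) t)
    rw [hg''eq]
    exact polyCont2 c (n + 1)
  have hVcont : Continuous V'' := contOf p V V' V'' hVpoly hV' hV''
  have hVhcont : Continuous Vh'' := contOf (p + 1) Vh Vh' Vh'' hVhpoly hVh' hVh''
  -- FTC helpers
  have key1 : ∀ (g' g'' : ℝ → X), (∀ t, HasDerivAt g' (g'' t) t) → Continuous g'' →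
      ∀ x : X, (∫ t in Set.Ioc a b, (inner ℝ (g'' t) x : ℝ))
        = (inner ℝ (g' b) x : ℝ) - inner ℝ (g' a) x := by
    intro g' g'' hd hc x
    rw [← intervalIntegral.integral_of_le hab.le]
    exact intervalIntegral.integral_eq_sub_of_hasDerivAt
      (fun t _ => by simpa using (hd t).inner ℝ (hasDerivAt_const t x))
      ((Continuous.inner hc continuous_const).intervalIntegrable a b)
  have key2 : ∀ (g g' g'' : ℝ → X), (∀ t, HasDerivAt g (g' t) t) →
      (∀ t, HasDerivAt g' (g'' t) t) → Continuous g'' →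
      ∀ x : X, (∫ t in Set.Ioc a b, (b - t) * (inner ℝ (g'' t) x : ℝ))
        = (inner ℝ (g b) x : ℝ) - inner ℝ (g a) x - (b - a) * inner ℝ (g' a) x := by
    intro g g' g'' hd hd' hc x
    rw [← intervalIntegral.integral_of_le hab.le]
    have := intervalIntegral.integral_eq_sub_of_hasDerivAt
      (f := fun t => (b - t) * (inner ℝ (g' t) x : ℝ) + (inner ℝ (g t) x : ℝ))
      (f' := fun t => (b - t) * (inner ℝ (g'' t) x : ℝ))
      (a := a) (b := b)
      (fun t _ => by
        have h1 : HasDerivAt (fun s : ℝ => b - s) (-1) t := by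
          simpa using (hasDerivAt_id t).const_sub b
        have h2 : HasDerivAt (fun s => (inner ℝ (g' s) x : ℝ)) (inner ℝ (g'' t) x : ℝ) t := by
          simpa using (hd' t).inner ℝ (hasDerivAt_const t x)
        have h3 : HasDerivAt (fun s => (inner ℝ (g s) x : ℝ)) (inner ℝ (g' t) x : ℝ) t := by
          simpa using (hd t).inner ℝ (hasDerivAt_const t x)
        have h := (h1.mul h2).add h3
        convert h using 1
        · funext s; simp only [Pi.add_apply, Pi.mul_apply]
        · ring)
      (((continuous_const.sub continuous_id).mul
        (Continuous.inner hc continuous_const)).intervalIntegrable a b)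
    rw [this]; ring
  -- Step 1: Vh' b = V' b
  have step1 : Vh' b = V' b := by
    apply ext_inner_right ℝ
    intro x
    have hq : IsPolyDeg (p - 1) (fun _ : ℝ => x) := by
      refine ⟨fun k => if k = 0 then x else 0, fun t => ?_⟩
      rw [Finset.sum_eq_single 0]
      · simp
      · intro k _ hk; simp [hk]
      · simp
    have h := hmom (fun _ => x) hq
    rw [key1 Vh' Vh'' hVh'' hVhcont x, key1 V' V'' hV'' hVcont x, hinit'] at h
    simp only [inner_sub_left] at h
    linarith
  -- Step 2: Vh b = V b
  have step2 : Vh b = V b := by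
    apply ext_inner_right ℝ
    intro x
    have hq : IsPolyDeg (p - 1) (fun t : ℝ => (b - t) • x) := by
      refine ⟨fun k => if k = 0 then b • x else if k = 1 then -x else 0, fun t => ?_⟩
      rw [← Finset.sum_subset (Finset.range_subset_range.2 (by omega : 2 ≤ p - 1 + 1))
        (fun k _ hk => by
          have : k ≠ 0 ∧ k ≠ 1 := by
            constructor <;> rintro rfl <;> simp at hk
          simp [this.1, this.2])]
      rw [Finset.sum_range_succ, Finset.sum_range_succ]
      simp [sub_eq_add_neg, add_smul, neg_smul]
    have h := hmom (fun t => (b - t) • x) hq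
    simp only [real_inner_smul_right] at h
    rw [key2 Vh Vh' Vh'' hVh' hVh'' hVhcont x, key2 V V' V'' hV' hV'' hVcont x,
      hinit, hinit'] at h
    simp only [inner_sub_left] at h
    have hba : b - a ≠ 0 := by linarith
    nlinarith [h]
  exact ⟨step1, step2⟩
end

section
/- Under the setting of the C¹-reconstruction V̂ of a degree-p polynomial V on an interval I_n of length τ_n with derivative jump J at t_{n-1}, the following exact identity holds: ‖(V - V̂)'‖_{L²(I_n;X)}² = τ_n · (p / ((2p-1)(2p+1))) · ‖J‖_X². -/
open MeasureTheory

open MeasureTheory Polynomial intervalIntegral Set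

private lemma polyIntegrable (f : Polynomial ℝ) (a b : ℝ) :
    IntervalIntegrable (fun t => f.eval t) volume a b :=
  (f.continuous_aeval).intervalIntegrable a b

private lemma polyIBP (a b : ℝ) (f g : Polynomial ℝ) :
    ∫ t in a..b, f.eval t * (derivative g).eval t
      = f.eval b * g.eval b - f.eval a * g.eval a
        - ∫ t in a..b, (derivative f).eval t * g.eval t :=
  integral_mul_deriv_eq_deriv_mul (fun x _ => f.hasDerivAt x) (fun x _ => g.hasDerivAt x)
    (polyIntegrable _ a b) (polyIntegrable _ a b)

private lemma iterIBP (a b : ℝ) (f : Polynomial ℝ) :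
    ∀ (k : ℕ) (_ : ∀ j < k, (derivative^[j] f).eval a = 0)
      (_ : ∀ j < k, (derivative^[j] f).eval b = 0) (r : Polynomial ℝ),
    ∫ t in a..b, (derivative^[k] f).eval t * r.eval t
      = (-1 : ℝ) ^ k * ∫ t in a..b, f.eval t * (derivative^[k] r).eval t := by
  intro k
  induction k generalizing f with
  | zero => intro _ _ r; simp
  | succ k ih =>
    intro ha hb r
    have h1 : ∫ t in a..b, (derivative^[k+1] f).eval t * r.eval t
        = (-1 : ℝ) ^ k * ∫ t in a..b, (derivative f).eval t * (derivative^[k] r).eval t := by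
      rw [Function.iterate_succ_apply]
      exact ih (derivative f)
        (fun j hj => by simpa [Function.iterate_succ_apply] using ha (j+1) (by omega))
        (fun j hj => by simpa [Function.iterate_succ_apply] using hb (j+1) (by omega)) r
    have h2 : ∫ t in a..b, (derivative f).eval t * (derivative^[k] r).eval t
        = - ∫ t in a..b, f.eval t * (derivative^[k+1] r).eval t := by
      have hb' :
          ∫ t in a..b, f.eval t * (derivative (derivative^[k] r)).eval t
            = f.eval b * (derivative^[k] r).eval b - f.eval a * (derivative^[k] r).eval a
              - ∫ t in a..b, (derivative f).eval t * (derivative^[k] r).eval t :=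
        polyIBP a b f (derivative^[k] r)
      have ha0 : f.eval a = 0 := by simpa using ha 0 (by omega)
      have hb0 : f.eval b = 0 := by simpa using hb 0 (by omega)
      rw [ha0, hb0] at hb'
      simp only [zero_mul, sub_zero, zero_sub] at hb'
      rw [← Function.iterate_succ_apply' derivative] at hb'
      linarith [hb']
    rw [h1, h2, pow_succ]
    ring

private lemma dvd_iter (c : ℝ) (m : ℕ) (s : Polynomial ℝ) :
    ∀ j : ℕ, (X - C c) ^ (m - j) ∣ derivative^[j] ((X - C c) ^ m * s) := by
  intro j
  induction j with
  | zero => simp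
  | succ j ih =>
    obtain ⟨u, hu⟩ := ih
    rw [Function.iterate_succ_apply', hu, derivative_mul, derivative_pow, derivative_X_sub_C,
      mul_one]
    have h1 : (X - C c) ^ (m - (j+1)) ∣ (X - C c) ^ (m - j - 1) := by
      rw [Nat.sub_sub]
    have h2 : (X - C c) ^ (m - (j+1)) ∣ (X - C c) ^ (m - j) :=
      pow_dvd_pow _ (by omega)
    exact dvd_add ((h1.mul_left _).mul_right u) (h2.mul_right _)

private lemma iterD_add (k : ℕ) (f g : Polynomial ℝ) :
    derivative^[k] (f + g) = derivative^[k] f + derivative^[k] g := by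
  induction k generalizing f g with
  | zero => simp
  | succ k ih => rw [Function.iterate_succ_apply, Function.iterate_succ_apply,
      Function.iterate_succ_apply, derivative_add, ih]

private lemma eval_dvd_iter_zero (c : ℝ) (m j : ℕ) (hj : j < m) (s : Polynomial ℝ) :
    (derivative^[j] ((X - C c) ^ m * s)).eval c = 0 := by
  obtain ⟨u, hu⟩ := dvd_iter c m s j
  rw [hu, eval_mul, eval_pow, eval_sub, eval_X, eval_C, sub_self, zero_pow (by omega), zero_mul]

private lemma eval_iter_self (c : ℝ) :
    ∀ (m : ℕ) (s : Polynomial ℝ),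
      (derivative^[m] ((X - C c) ^ m * s)).eval c = m.factorial * s.eval c := by
  intro m
  induction m with
  | zero => simp
  | succ m ih =>
    intro s
    have hd : derivative ((X - C c) ^ (m+1) * s)
        = C ((m:ℝ)+1) * ((X - C c) ^ m * s) + (X - C c) ^ (m+1) * derivative s := by
      rw [derivative_mul, derivative_pow, derivative_X_sub_C, mul_one]
      push_cast
      ring
    rw [Function.iterate_succ_apply, hd, iterD_add, eval_add,
      iterate_derivative_C_mul, eval_mul, eval_C, ih,
      eval_dvd_iter_zero c (m+1) m (by omega), add_zero, Nat.factorial_succ]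
    push_cast
    ring

private lemma beta (a b : ℝ) :
    ∀ (n m : ℕ), ∫ t in a..b, (t - a) ^ m * (b - t) ^ n
      = (m.factorial * n.factorial / (m + n + 1).factorial) * (b - a) ^ (m + n + 1) := by
  intro n
  induction n with
  | zero =>
    intro m
    simp only [pow_zero, mul_one]
    rw [integral_comp_sub_right (fun x => x ^ m) a, integral_pow]
    rw [sub_self, zero_pow (Nat.succ_ne_zero m), sub_zero, Nat.factorial_succ]
    have hfac : ((m).factorial : ℝ) ≠ 0 := by positivity
    simp only [Nat.add_zero, Nat.factorial_zero, Nat.factorial_succ]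
    push_cast
    field_simp
  | succ n ih =>
    intro m
    have hu : ∀ x ∈ Set.uIcc a b, HasDerivAt (fun x => (b - x) ^ (n+1))
        (-((n+1 : ℝ) * (b - x) ^ n)) x := by
      intro x _
      have h1 : HasDerivAt (fun x : ℝ => b - x) (-1) x := (hasDerivAt_id x).const_sub b
      have := (hasDerivAt_pow (n+1) (b - x)).comp x h1
      exact this.congr_deriv (by push_cast; ring)
    have hv : ∀ x ∈ Set.uIcc a b, HasDerivAt (fun x => (x - a) ^ (m+1))
        (((m+1 : ℝ)) * (x - a) ^ m) x := by
      intro x _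
      have h1 : HasDerivAt (fun x : ℝ => x - a) 1 x := (hasDerivAt_id x).sub_const a
      have := (hasDerivAt_pow (m+1) (x - a)).comp x h1
      exact this.congr_deriv (by push_cast; ring)
    have int1 : IntervalIntegrable (fun x : ℝ => -((n+1 : ℝ) * (b - x) ^ n)) volume a b :=
      Continuous.intervalIntegrable (by continuity) a b
    have int2 : IntervalIntegrable (fun x : ℝ => (m+1 : ℝ) * (x - a) ^ m) volume a b :=
      Continuous.intervalIntegrable (by continuity) a b
    have hIBP := intervalIntegral.integral_mul_deriv_eq_deriv_mul hu hv int1 int2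
    have hL : ∫ x in a..b, (b - x) ^ (n+1) * ((m+1 : ℝ) * (x - a) ^ m)
        = (m+1 : ℝ) * ∫ x in a..b, (x - a) ^ m * (b - x) ^ (n+1) := by
      rw [← intervalIntegral.integral_const_mul]
      congr 1; funext x; ring
    have hR : ∫ x in a..b, -((n+1 : ℝ) * (b - x) ^ n) * (x - a) ^ (m+1)
        = -((n+1 : ℝ) * ∫ x in a..b, (x - a) ^ (m+1) * (b - x) ^ n) := by
      rw [← intervalIntegral.integral_const_mul, ← intervalIntegral.integral_neg]
      congr 1; funext x; ring
    rw [hL, hR, ih (m+1), sub_self, sub_self, zero_pow (Nat.succ_ne_zero n),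
      zero_pow (Nat.succ_ne_zero m), zero_mul, mul_zero, zero_sub, sub_neg_eq_add, neg_zero,
      zero_add] at hIBP
    have hm1 : (m + 1 : ℝ) ≠ 0 := by positivity
    have e1 : (m + 1) + n + 1 = m + (n + 1) + 1 := by omega
    rw [e1] at hIBP
    have key : ∫ x in a..b, (x - a) ^ m * (b - x) ^ (n+1)
        = ((n+1 : ℝ) * ((m+1).factorial * n.factorial / (m + (n+1) + 1).factorial
            * (b - a) ^ (m + (n+1) + 1))) / (m+1 : ℝ) := by
      rw [eq_div_iff hm1, mul_comm _ ((m:ℝ)+1), hIBP]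
    rw [key, Nat.factorial_succ (m), Nat.factorial_succ n]
    have hfac : ((m + (n+1) + 1).factorial : ℝ) ≠ 0 := by positivity
    push_cast
    field_simp

noncomputable def Fpoly (a b : ℝ) (n : ℕ) : Polynomial ℝ :=
  (X - C a) ^ n * (X - C b) ^ (n + 1)

noncomputable def gpoly (a b : ℝ) (n : ℕ) : Polynomial ℝ :=
  C ((n.factorial * (a - b) ^ (n + 1))⁻¹) * derivative^[n] (Fpoly a b n)

section gprops
variable (a b : ℝ) (n : ℕ)

private lemma Fva : ∀ j < n, (derivative^[j] (Fpoly a b n)).eval a = 0 := fun j hj =>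
  eval_dvd_iter_zero a n j hj _

private lemma Fvb : ∀ j < n + 1, (derivative^[j] (Fpoly a b n)).eval b = 0 := fun j hj => by
  rw [Fpoly, mul_comm]
  exact eval_dvd_iter_zero b (n+1) j hj _

private lemma gpoly_natDegree_le : (gpoly a b n).natDegree ≤ n + 1 := by
  refine (natDegree_C_mul_le _ _).trans ((natDegree_iterate_derivative _ _).trans ?_)
  have h1 : (Fpoly a b n).natDegree ≤ 2 * n + 1 := by
    refine (natDegree_mul_le).trans ?_
    have h2 := natDegree_pow_le (p := X - C a) (n := n)
    have h3 := natDegree_pow_le (p := X - C b) (n := n + 1)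
    have h4 : (X - C a).natDegree ≤ 1 := natDegree_X_sub_C_le a
    have h5 : (X - C b).natDegree ≤ 1 := natDegree_X_sub_C_le b
    nlinarith [natDegree_pow (X - C a) n, natDegree_pow (X - C b) (n+1),
      natDegree_X_sub_C a, natDegree_X_sub_C b]
  omega

variable (hab : a ≠ b)
include hab

private lemma gpoly_eval_a : (gpoly a b n).eval a = 1 := by
  have h1 : (derivative^[n] (Fpoly a b n)).eval a
      = n.factorial * ((X - C b) ^ (n+1)).eval a := eval_iter_self a n _
  rw [gpoly, eval_mul, eval_C, h1]
  have h2 : ((X - C b) ^ (n+1)).eval a = (a - b) ^ (n+1) := by simp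
  rw [h2]
  have hne : (n.factorial : ℝ) * (a - b) ^ (n + 1) ≠ 0 := by
    apply mul_ne_zero (by positivity)
    exact pow_ne_zero _ (sub_ne_zero_of_ne hab)
  field_simp

omit hab in
private lemma gpoly_eval_b : (gpoly a b n).eval b = 0 := by
  rw [gpoly, eval_mul, Fvb a b n n (by omega), mul_zero]

end gprops

section gprops2
variable (a b : ℝ) (n : ℕ)

private lemma gpoly_ortho (r : Polynomial ℝ) (hr : r.natDegree < n) :
    ∫ t in a..b, (gpoly a b n).eval t * r.eval t = 0 := by
  have h1 : ∀ t : ℝ, (gpoly a b n).eval t * r.eval t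
      = (n.factorial * (a - b) ^ (n + 1))⁻¹
        * ((derivative^[n] (Fpoly a b n)).eval t * r.eval t) := by
    intro t; rw [gpoly, eval_mul, eval_C]; ring
  simp_rw [h1]
  rw [intervalIntegral.integral_const_mul,
    iterIBP a b (Fpoly a b n) n (Fva a b n) (fun j hj => Fvb a b n j (by omega)) r,
    iterate_derivative_eq_zero hr]
  simp

private lemma gpoly_mom (hn : 1 ≤ n) (hab : a ≠ b) (r : Polynomial ℝ) (hr : r.natDegree ≤ n) :
    ∫ t in a..b, (derivative (gpoly a b n)).eval t * r.eval t = - r.eval a := by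
  have hIBP := polyIBP a b (gpoly a b n) r
  rw [gpoly_eval_a a b n hab, gpoly_eval_b a b n, one_mul, zero_mul, zero_sub] at hIBP
  have hdr : (derivative r).natDegree < n :=
    lt_of_le_of_lt (natDegree_derivative_le r) (by omega)
  rw [gpoly_ortho a b n (derivative r) hdr] at hIBP
  linarith

private lemma iterD_sum {ι : Type*} (s : Finset ι) (f : ι → Polynomial ℝ) (k : ℕ) :
    derivative^[k] (∑ i ∈ s, f i) = ∑ i ∈ s, derivative^[k] (f i) := by
  induction k with
  | zero => simp
  | succ k ih =>
    rw [Function.iterate_succ_apply', ih, derivative_sum]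
    simp_rw [← Function.iterate_succ_apply' derivative]

private lemma D2nF (hab : a ≠ b) :
    derivative^[2*n] (Fpoly a b n)
      = C (((n:ℝ)+1) * (a-b) * (2*n).factorial) + C (((2*n+1).factorial : ℝ)) * (X - C a) := by
  have hXb : (X - C b : Polynomial ℝ) = (X - C a) + C (a - b) := by rw [C_sub]; ring
  have hF : Fpoly a b n
      = ∑ j ∈ Finset.range (n+2),
          C ((a - b)^(n+1-j) * ((n+1).choose j : ℝ)) * (X - C a)^(n+j) := by
    rw [Fpoly, hXb, add_pow, Finset.mul_sum]
    apply Finset.sum_congr rfl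
    intro j _
    rw [C_mul, C_pow, C_sub, ← C_eq_natCast]
    ring_nf
  rw [hF, iterD_sum]
  have hterm : ∀ j, derivative^[2*n] (C ((a - b)^(n+1-j) * ((n+1).choose j : ℝ)) * (X - C a)^(n+j))
      = C ((a - b)^(n+1-j) * ((n+1).choose j : ℝ))
        * ((n+j).descFactorial (2*n) • (X - C a)^(n+j-2*n)) := by
    intro j
    rw [iterate_derivative_C_mul, iterate_derivative_X_sub_pow]
  simp_rw [hterm]
  rw [Finset.sum_range_succ, Finset.sum_range_succ]
  have hzero : ∀ j ∈ Finset.range n,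
      C ((a - b)^(n+1-j) * ((n+1).choose j : ℝ))
        * ((n+j).descFactorial (2*n) • (X - C a)^(n+j-2*n)) = 0 := by
    intro j hj
    rw [Finset.mem_range] at hj
    rw [Nat.descFactorial_eq_zero_iff_lt.mpr (by omega), zero_smul, mul_zero]
  rw [Finset.sum_eq_zero hzero, zero_add]
  have hd1 : (n+n).descFactorial (2*n) = (2*n).factorial := by
    rw [show n+n = 2*n by omega, Nat.descFactorial_self]
  have hd2 : (n+(n+1)).descFactorial (2*n) = (2*n+1).factorial := by
    have h2 : (2*n+1).descFactorial (2*n+1) = (2*n+1).factorial := Nat.descFactorial_self _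
    rw [Nat.descFactorial_succ, show 2*n+1-2*n = 1 by omega, one_mul] at h2
    rw [show n+(n+1) = 2*n+1 by omega, h2]
  rw [show n+1-n = 1 by omega, show n+n-2*n = 0 by omega, show n+(n+1)-2*n = 1 by omega,
    show n+1-(n+1) = 0 by omega, hd1, hd2, Nat.choose_succ_self_right, Nat.choose_self]
  simp only [pow_zero, pow_one, Nat.cast_one, mul_one, nsmul_eq_mul, ← C_eq_natCast, ← C_mul]
  rw [C_1, one_mul]
  congr 2
  push_cast
  ring
end gprops2

section gnorm
variable (a b : ℝ) (n : ℕ)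

private lemma gpoly_norm (hab : a < b) :
    ∫ t in a..b, ((gpoly a b n).eval t)^2
      = (b - a) * (((n:ℝ)+1)/((2*(n:ℝ)+1)*(2*(n:ℝ)+3))) := by
  have habne : a ≠ b := ne_of_lt hab
  set c : ℝ := (n.factorial * (a - b) ^ (n + 1))⁻¹ with hc
  have hcne : (n.factorial : ℝ) * (a - b) ^ (n + 1) ≠ 0 :=
    mul_ne_zero (by positivity) (pow_ne_zero _ (sub_ne_zero_of_ne habne))
  -- step 1: pointwise rewrite
  have h1 : ∀ t : ℝ, ((gpoly a b n).eval t)^2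
      = c * ((derivative^[n] (Fpoly a b n)).eval t * (gpoly a b n).eval t) := by
    intro t
    rw [gpoly, eval_mul, eval_C]
    ring
  simp_rw [h1]
  rw [intervalIntegral.integral_const_mul,
    iterIBP a b (Fpoly a b n) n (Fva a b n) (fun j hj => Fvb a b n j (by omega)) (gpoly a b n)]
  -- step 3: identify derivative^[n] g
  have h3 : derivative^[n] (gpoly a b n)
      = C c * (C (((n:ℝ)+1) * (a-b) * (2*n).factorial)
          + C (((2*n+1).factorial : ℝ)) * (X - C a)) := by
    rw [gpoly, iterate_derivative_C_mul, ← D2nF a b n habne, show 2*n = n+n by omega,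
      Function.iterate_add_apply]
  rw [h3]
  -- step 4: pointwise evaluation of the remaining integrand
  have h4 : ∀ t : ℝ, (Fpoly a b n).eval t
        * ((C c * (C (((n:ℝ)+1) * (a-b) * (2*n).factorial)
            + C (((2*n+1).factorial : ℝ)) * (X - C a))).eval t)
      = c * ((-1:ℝ)^(n+1) * ((((n:ℝ)+1) * (a-b) * (2*n).factorial)
            * ((t-a)^n * (b-t)^(n+1))
          + ((2*n+1).factorial : ℝ) * ((t-a)^(n+1) * (b-t)^(n+1)))) := by
    intro t
    have hF : (Fpoly a b n).eval t = (-1:ℝ)^(n+1) * ((t-a)^n * (b-t)^(n+1)) := by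
      rw [Fpoly, eval_mul, eval_pow, eval_pow, eval_sub, eval_sub, eval_X, eval_C, eval_C,
        show t - b = -(b-t) by ring, neg_pow]
      ring
    rw [hF]
    simp only [eval_mul, eval_add, eval_C, eval_sub, eval_X]
    ring
  simp_rw [h4]
  rw [intervalIntegral.integral_const_mul, intervalIntegral.integral_const_mul]
  rw [intervalIntegral.integral_add
    (((Continuous.intervalIntegrable (by continuity) a b)).const_mul _)
    (((Continuous.intervalIntegrable (by continuity) a b)).const_mul _),
    intervalIntegral.integral_const_mul, intervalIntegral.integral_const_mul,
    beta a b (n+1) n, beta a b (n+1) (n+1)]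
  -- final arithmetic
  have e1 : n + (n+1) + 1 = 2*n+2 := by omega
  have e2 : (n+1) + (n+1) + 1 = 2*n+3 := by omega
  rw [e1, e2]
  have f1 : ((2*n+1).factorial : ℝ) = (2*(n:ℝ)+1) * (2*n).factorial := by
    rw [show 2*n+1 = (2*n)+1 by omega, Nat.factorial_succ]; push_cast; ring
  have f2 : ((2*n+2).factorial : ℝ) = (2*(n:ℝ)+2) * (2*(n:ℝ)+1) * (2*n).factorial := by
    rw [show 2*n+2 = (2*n+1)+1 by omega, Nat.factorial_succ]
    push_cast [f1]
    ring
  have f3 : ((2*n+3).factorial : ℝ)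
      = (2*(n:ℝ)+3) * (2*(n:ℝ)+2) * (2*(n:ℝ)+1) * (2*n).factorial := by
    rw [show 2*n+3 = (2*n+2)+1 by omega, Nat.factorial_succ]
    push_cast [f2]
    ring
  have f4 : ((n+1).factorial : ℝ) = ((n:ℝ)+1) * n.factorial := by
    rw [Nat.factorial_succ]; push_cast; ring
  have f5 : (a-b)^(n+1) * (a-b)^(n+1) = (b-a)^(2*n+2) := by
    rw [← pow_add, show (n+1)+(n+1) = 2*n+2 by omega, show a-b = -(b-a) by ring,
      Even.neg_pow ⟨n+1, by omega⟩]
  have hsgn : ((-1:ℝ))^n * ((-1:ℝ))^(n+1) = -1 := by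
    rw [← pow_add, show n+(n+1) = 2*n+1 by omega]
    exact Odd.neg_one_pow ⟨n, by omega⟩
  have collapse : ∀ E : ℝ, c * ((-1:ℝ)^n * (c * ((-1:ℝ)^(n+1) * E))) = -(c*c*E) := by
    intro E
    rw [show c * ((-1:ℝ)^n * (c * ((-1:ℝ)^(n+1) * E)))
        = ((-1:ℝ)^n * (-1:ℝ)^(n+1)) * (c*c*E) by ring, hsgn]
    ring
  rw [collapse]
  have f6 : (b-a)^(2*n+3) = (b-a)^(2*n+2) * (b-a) := by
    rw [show 2*n+3 = (2*n+2)+1 by omega, pow_succ]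
  rw [f1, f2, f3, f4, f6, ← f5, hc]
  set u : ℝ := (a-b)^(n+1) with hu
  have hune : u ≠ 0 := pow_ne_zero _ (sub_ne_zero_of_ne habne)
  have hfn : ((n.factorial : ℝ)) ≠ 0 := by positivity
  have hf2n : (((2*n).factorial : ℝ)) ≠ 0 := by positivity
  have hτ : b - a ≠ 0 := sub_ne_zero_of_ne (ne_of_gt hab)
  have h21 : (2*(n:ℝ)+1) ≠ 0 := by positivity
  have h22 : (2*(n:ℝ)+2) ≠ 0 := by positivity
  have h23 : (2*(n:ℝ)+3) ≠ 0 := by positivity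
  rw [show a - b = -(b-a) by ring]
  field_simp
  ring

section polydeg
variable {X : Type} [NormedAddCommGroup X] [NormedSpace ℝ X]

private lemma IsPolyDeg.continuous' {n : ℕ} {f : ℝ → X} (h : IsPolyDeg n f) : Continuous f := by
  obtain ⟨c, hc⟩ := h
  rw [funext hc]
  exact continuous_finset_sum _ fun k _ => (continuous_pow k).smul continuous_const

private lemma IsPolyDeg.mono {m n : ℕ} {f : ℝ → X} (h : IsPolyDeg m f) (hmn : m ≤ n) :
    IsPolyDeg n f := by
  obtain ⟨c, hc⟩ := h
  refine ⟨fun k => if k < m + 1 then c k else 0, fun t => ?_⟩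
  rw [hc t]
  rw [← Finset.sum_subset (Finset.range_subset_range.mpr (by omega : m + 1 ≤ n + 1))
    (fun k _ hk => by
      rw [Finset.mem_range] at hk
      simp only [if_neg (by omega : ¬ k < m + 1), smul_zero])]
  exact Finset.sum_congr rfl fun k hk => by
    rw [Finset.mem_range] at hk
    simp only [if_pos hk]

private lemma IsPolyDeg.sub' {n : ℕ} {f g : ℝ → X} (hf : IsPolyDeg n f) (hg : IsPolyDeg n g) :
    IsPolyDeg n (fun t => f t - g t) := by
  obtain ⟨c, hc⟩ := hf; obtain ⟨d, hd⟩ := hg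
  refine ⟨fun k => c k - d k, fun t => ?_⟩
  simp only [hc t, hd t, smul_sub, ← Finset.sum_sub_distrib]

private lemma IsPolyDeg.deriv' {n : ℕ} {f f' : ℝ → X}
    (h : IsPolyDeg (n+1) f) (hd : ∀ t, HasDerivAt f (f' t) t) : IsPolyDeg n f' := by
  obtain ⟨c, hc⟩ := h
  refine ⟨fun k => (((k+1 : ℕ)) : ℝ) • c (k+1), fun t => ?_⟩
  have hder : HasDerivAt (fun t : ℝ => ∑ k ∈ Finset.range (n+1+1), t ^ k • c k)
      (∑ k ∈ Finset.range (n+1+1), (((k : ℕ) : ℝ) * t ^ (k-1)) • c k) t :=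
    HasDerivAt.fun_sum fun k _ => (hasDerivAt_pow k t).smul_const (c k)
  rw [← funext hc] at hder
  rw [(hd t).unique hder, Finset.sum_range_succ']
  simp only [Nat.cast_zero, zero_mul, zero_smul, add_zero, Nat.cast_ofNat, pow_zero]
  refine Finset.sum_congr rfl fun k _ => ?_
  rw [Nat.add_sub_cancel, smul_smul]
  push_cast
  ring_nf

private lemma isPolyDeg_smul (q : Polynomial ℝ) {n : ℕ} (hq : q.natDegree ≤ n) (J : X) :
    IsPolyDeg n (fun t => q.eval t • J) := by
  refine ⟨fun k => q.coeff k • J, fun t => ?_⟩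
  show q.eval t • J = ∑ k ∈ Finset.range (n + 1), t ^ k • (q.coeff k • J)
  rw [Polynomial.eval_eq_sum_range' (Nat.lt_succ_of_le hq), Finset.sum_smul]
  exact Finset.sum_congr rfl fun k _ => by rw [smul_smul, mul_comm]

end polydeg

/-- Exact identity for the derivative of the reconstruction error:
`‖(V - V̂)'‖²_{L²} = τₙ p/((2p-1)(2p+1)) ‖J‖²`. -/
theorem reconstruction_derivative_L2_identity
    {X : Type} [NormedAddCommGroup X] [InnerProductSpace ℝ X] [CompleteSpace X]
    (p : ℕ) (a b : ℝ) (hab : a < b)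
    (V V' V'' Vh Vh' Vh'' : ℝ → X) (J : X)
    (hVpoly : IsPolyDeg p V) (hVhpoly : IsPolyDeg (p + 1) Vh)
    (hV' : ∀ t, HasDerivAt V (V' t) t) (hV'' : ∀ t, HasDerivAt V' (V'' t) t)
    (hVh' : ∀ t, HasDerivAt Vh (Vh' t) t) (hVh'' : ∀ t, HasDerivAt Vh' (Vh'' t) t)
    (hmom : ∀ q : ℝ → X, IsPolyDeg (p - 1) q →
      ∫ t in Set.Ioc a b, (inner ℝ (Vh'' t) (q t) : ℝ)
        = (∫ t in Set.Ioc a b, (inner ℝ (V'' t) (q t) : ℝ)) + (inner ℝ J (q a) : ℝ))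
    (hinit : Vh a = V a) (hinit' : Vh' a = V' a - J)
    (hp : 2 ≤ p) :
    ∫ t in Set.Ioc a b, ‖V' t - Vh' t‖ ^ 2
      = (b - a) * ((p : ℝ) / ((2 * (p:ℝ) - 1) * (2 * (p:ℝ) + 1))) * ‖J‖ ^ 2 := by
  obtain ⟨m, rfl⟩ : ∃ m, p = m + 2 := ⟨p - 2, by omega⟩
  have habne : a ≠ b := ne_of_lt hab
  have hmom' : ∀ q : ℝ → X, IsPolyDeg (m + 1) q →
      ∫ t in Set.Ioc a b, (inner ℝ (Vh'' t) (q t) : ℝ)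
        = (∫ t in Set.Ioc a b, (inner ℝ (V'' t) (q t) : ℝ)) + (inner ℝ J (q a) : ℝ) :=
    fun q hq => hmom q (by simpa using hq)
  set g : Polynomial ℝ := gpoly a b (m+1) with hgdef
  set Df : ℝ → X := fun t => (V'' t - Vh'' t) - (derivative g).eval t • J with hDf
  have hD : ∀ t, HasDerivAt (fun t => (V' t - Vh' t) - g.eval t • J) (Df t) t := fun t =>
    ((hV'' t).sub (hVh'' t)).sub ((g.hasDerivAt t).smul_const J)
  have hV'poly : IsPolyDeg (m+1) V' := IsPolyDeg.deriv' (by simpa using hVpoly) hV'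
  have hV''poly : IsPolyDeg m V'' := hV'poly.deriv' hV''
  have hVh'poly : IsPolyDeg (m+2) Vh' := IsPolyDeg.deriv' (by simpa using hVhpoly) hVh'
  have hVh''poly : IsPolyDeg (m+1) Vh'' := hVh'poly.deriv' hVh''
  have hgd : (derivative g).natDegree ≤ m+1 := by
    have h1 : g.natDegree ≤ m + 2 := gpoly_natDegree_le a b (m+1)
    have h2 := natDegree_derivative_le g
    omega
  have hDfpoly : IsPolyDeg (m+1) Df :=
    ((hV''poly.mono (by omega)).sub' hVh''poly).sub' (isPolyDeg_smul _ hgd J)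
  obtain ⟨cD, hcD⟩ := hDfpoly
  have hDfpoly : IsPolyDeg (m+1) Df := ⟨cD, hcD⟩
  set r : Polynomial ℝ := ∑ k ∈ Finset.range (m+2), C (inner ℝ J (cD k) : ℝ) * Polynomial.X^k with hr
  have hrdeg : r.natDegree ≤ m+1 :=
    natDegree_sum_le_of_forall_le _ _ fun i hi =>
      (natDegree_C_mul_le _ _).trans (by
        rw [Polynomial.natDegree_X_pow]; exact Nat.lt_succ_iff.mp (Finset.mem_range.mp hi))
  have hreval : ∀ t, r.eval t = (inner ℝ J (Df t) : ℝ) := by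
    intro t
    rw [hcD t, inner_sum, hr, eval_finset_sum]
    refine Finset.sum_congr rfl fun k _ => ?_
    rw [eval_mul, eval_C, eval_pow, eval_X, real_inner_smul_right]
    ring
  have hDfc : Continuous Df := hDfpoly.continuous'
  have hV''c : Continuous V'' := hV''poly.continuous'
  have hVh''c : Continuous Vh'' := hVh''poly.continuous'
  have int1 : IntegrableOn (fun t => (inner ℝ (V'' t) (Df t) : ℝ)) (Set.Ioc a b) volume :=
    (hV''c.inner hDfc).integrableOn_Ioc
  have int2 : IntegrableOn (fun t => (inner ℝ (Vh'' t) (Df t) : ℝ)) (Set.Ioc a b) volume :=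
    (hVh''c.inner hDfc).integrableOn_Ioc
  have int3 : IntegrableOn (fun t => (derivative g).eval t * (inner ℝ J (Df t) : ℝ))
      (Set.Ioc a b) volume :=
    (((derivative g).continuous_aeval).mul (continuous_const.inner hDfc)).integrableOn_Ioc
  have hsplit : ∀ t : ℝ, (inner ℝ (Df t) (Df t) : ℝ)
      = (inner ℝ (V'' t) (Df t) : ℝ) - (inner ℝ (Vh'' t) (Df t) : ℝ)
        - (derivative g).eval t * (inner ℝ J (Df t) : ℝ) := by
    intro t
    have hx : ∀ x : X, (inner ℝ ((V'' t - Vh'' t) - (derivative g).eval t • J) x : ℝ)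
        = (inner ℝ (V'' t) x : ℝ) - (inner ℝ (Vh'' t) x : ℝ)
          - (derivative g).eval t * (inner ℝ J x : ℝ) := fun x => by
      rw [inner_sub_left, inner_sub_left, real_inner_smul_left]
    have hDft : Df t = (V'' t - Vh'' t) - (derivative g).eval t • J := rfl
    nth_rewrite 1 [hDft]
    exact hx (Df t)
  have hkey : ∫ t in Set.Ioc a b, (inner ℝ (Df t) (Df t) : ℝ) = 0 := by
    have hs := hmom' Df hDfpoly
    have hI3 : ∫ t in Set.Ioc a b, (derivative g).eval t * (inner ℝ J (Df t) : ℝ)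
        = - (inner ℝ J (Df a) : ℝ) := by
      have h1 : ∫ t in Set.Ioc a b, (derivative g).eval t * (inner ℝ J (Df t) : ℝ)
          = ∫ t in a..b, (derivative g).eval t * r.eval t := by
        rw [intervalIntegral.integral_of_le hab.le]
        exact (setIntegral_congr_fun measurableSet_Ioc fun t _ => by rw [hreval t]).symm
      rw [h1, gpoly_mom a b (m+1) (by omega) habne r hrdeg, hreval a]
    calc ∫ t in Set.Ioc a b, (inner ℝ (Df t) (Df t) : ℝ)
        = ∫ t in Set.Ioc a b, ((inner ℝ (V'' t) (Df t) : ℝ) - (inner ℝ (Vh'' t) (Df t) : ℝ)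
            - (derivative g).eval t * (inner ℝ J (Df t) : ℝ)) :=
          setIntegral_congr_fun measurableSet_Ioc fun t _ => hsplit t
      _ = (∫ t in Set.Ioc a b, (inner ℝ (V'' t) (Df t) : ℝ))
          - (∫ t in Set.Ioc a b, (inner ℝ (Vh'' t) (Df t) : ℝ))
          - ∫ t in Set.Ioc a b, (derivative g).eval t * (inner ℝ J (Df t) : ℝ) := by
          have e1 := integral_sub (μ := Measure.restrict volume (Set.Ioc a b)) int1 int2
          have e2 := integral_sub (μ := Measure.restrict volume (Set.Ioc a b))
            (int1.sub int2) int3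
          simp only [Pi.sub_apply] at e1 e2
          rw [e2, e1]
      _ = 0 := by rw [hs, hI3]; ring
  have hnn : Set.EqOn Df 0 (Set.Ioc a b) := by
    have h0 : ∫ t in Set.Ioc a b, ‖Df t‖^2 = 0 := by
      rw [← hkey]
      exact setIntegral_congr_fun measurableSet_Ioc fun t _ =>
        (real_inner_self_eq_norm_sq _).symm
    have hcont2 : Continuous fun t => ‖Df t‖^2 := (hDfc.norm).pow 2
    have hae := (integral_eq_zero_iff_of_nonneg (fun t => sq_nonneg _)
      hcont2.integrableOn_Ioc).mp h0
    have heq : Set.EqOn (fun t => ‖Df t‖^2) 0 (Set.Ioc a b) :=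
      Measure.eqOn_Ioc_of_ae_eq (μ := volume) hae hcont2.continuousOn continuousOn_const
    intro t ht
    have h2 : ‖Df t‖ ^ 2 = 0 := heq ht
    have h3 : ‖Df t‖ = 0 := (pow_eq_zero_iff two_ne_zero).mp h2
    simpa using norm_eq_zero.mp h3
  have hIcc : Set.EqOn Df 0 (Set.Icc a b) := by
    rw [← closure_Ioc habne]
    exact hnn.closure hDfc continuous_const
  have hconst : ∀ t ∈ Set.Icc a b,
      (V' t - Vh' t) - g.eval t • J = (V' a - Vh' a) - g.eval a • J := by
    apply constant_of_has_deriv_right_zero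
    · exact (continuous_iff_continuousAt.mpr fun t => (hD t).continuousAt).continuousOn
    · intro x hx
      have hx0 : Df x = 0 := hIcc (Set.mem_Icc_of_Ico hx)
      simpa [hx0] using (hD x).hasDerivWithinAt (s := Set.Ici x)
  have hEa : V' a - Vh' a - g.eval a • J = 0 := by
    rw [hinit', gpoly_eval_a a b (m+1) habne, one_smul]
    abel
  have hEW : ∀ t ∈ Set.Ioc a b, V' t - Vh' t = g.eval t • J := by
    intro t ht
    have h2 := hconst t (Set.Ioc_subset_Icc_self ht)
    rw [hEa, sub_eq_zero] at h2
    exact h2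
  calc ∫ t in Set.Ioc a b, ‖V' t - Vh' t‖ ^ 2
      = ∫ t in Set.Ioc a b, (g.eval t)^2 * ‖J‖^2 :=
        setIntegral_congr_fun measurableSet_Ioc fun t ht => by
          rw [hEW t ht, norm_smul, mul_pow, Real.norm_eq_abs, sq_abs]
    _ = (∫ t in Set.Ioc a b, (g.eval t)^2) * ‖J‖^2 := integral_mul_const _ _
    _ = ((b - a) * (((m+1:ℕ):ℝ)+1)/((2*((m+1:ℕ):ℝ)+1)*(2*((m+1:ℕ):ℝ)+3))) * ‖J‖^2 := by
        rw [← intervalIntegral.integral_of_le hab.le, gpoly_norm a b (m+1) hab]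
        ring
    _ = (b - a) * (((m+2 : ℕ) : ℝ) / ((2 * ((m+2:ℕ):ℝ) - 1) * (2 * ((m+2:ℕ):ℝ) + 1))) * ‖J‖ ^ 2 := by
        push_cast
        ring
end gnorm
end

section
/- Under the setting of the C¹-reconstruction V̂ of a degree-p polynomial V on I_n with derivative jump J at t_{n-1}, one has the exact identity ‖(V - V̂)'‖_{L^∞(I_n;X)} = ‖J‖_X. -/
open MeasureTheory

open Polynomial intervalIntegral Set


theorem iter_deriv_add (n : ℕ) (u v : ℝ[X]) : (⇑derivative)^[n] (u + v)
    = (⇑derivative)^[n] u + (⇑derivative)^[n] v := by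
  induction n generalizing u v with
  | zero => simp
  | succ m ihm => simp [Function.iterate_succ_apply, derivative_add, ihm]

theorem dvd_iter_deriv (a : ℝ) : ∀ (k m : ℕ) (q : ℝ[X]), (X - C a) ^ m ∣ q →
    (X - C a) ^ (m - k) ∣ (⇑derivative)^[k] q := by
  intro k
  induction k with
  | zero => simp
  | succ k ih =>
    intro m q hq
    rw [Function.iterate_succ_apply]
    have : (X - C a) ^ (m - 1) ∣ derivative q := by
      obtain ⟨r, rfl⟩ := hq
      rw [derivative_mul, derivative_pow]
      rcases Nat.eq_zero_or_pos m with hm | hm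
      · simp [hm]
      · exact dvd_add (Dvd.dvd.mul_right (Dvd.dvd.mul_right (dvd_mul_left _ _) _) _)
          (Dvd.dvd.mul_right (pow_dvd_pow _ (Nat.sub_le m 1)) _)
    have := ih (m - 1) (derivative q) this
    rwa [Nat.sub_sub, Nat.add_comm] at this

theorem eval_iter_deriv_zero (a : ℝ) (k m : ℕ) (q : ℝ[X]) (h : (X - C a) ^ m ∣ q)
    (hk : k < m) : eval a ((⇑derivative)^[k] q) = 0 := by
  obtain ⟨r, hr⟩ := dvd_iter_deriv a k m q h
  rw [hr, eval_mul, eval_pow, eval_sub, eval_X, eval_C, sub_self,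
    zero_pow (by omega), zero_mul]

theorem eval_iter_deriv_root_mul (b : ℝ) : ∀ (n : ℕ) (g : ℝ[X]),
    eval b ((⇑derivative)^[n] ((X - C b) ^ n * g)) = n.factorial * eval b g := by
  intro n
  induction n with
  | zero => simp
  | succ n ih =>
    intro g
    rw [Function.iterate_succ_apply, derivative_mul, derivative_pow]
    simp only [derivative_X_sub_C, mul_one, Nat.cast_add, Nat.cast_one, Nat.add_sub_cancel]
    have h2 : eval b ((⇑derivative)^[n] ((X - C b) ^ (n+1) * derivative g)) = 0 :=
      eval_iter_deriv_zero b n (n+1) _ (Dvd.intro _ rfl) (Nat.lt_succ_self n)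
    rw [iter_deriv_add, eval_add, h2, add_zero, mul_assoc, iterate_derivative_C_mul,
      eval_mul, ih g, eval_C, Nat.factorial_succ]
    push_cast
    ring


theorem ode_aux (a b : ℝ) (n : ℕ) (hn : 1 ≤ n) :
    ∀ k : ℕ, ((X - C a) * (X - C b)) * (⇑derivative)^[k+2] (((X - C a) * (X - C b))^n)
      + ((k:ℝ[X]) + 1) * (derivative ((X - C a) * (X - C b)) * (⇑derivative)^[k+1] (((X - C a) * (X - C b))^n))
      + (((k:ℝ[X]) + 1) * (k:ℝ[X])) * (⇑derivative)^[k] (((X - C a) * (X - C b))^n)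
    = (n : ℝ[X]) * (derivative ((X - C a) * (X - C b)) * (⇑derivative)^[k+1] (((X - C a) * (X - C b))^n))
      + (2 * (n:ℝ[X]) * ((k:ℝ[X]) + 1)) * (⇑derivative)^[k] (((X - C a) * (X - C b))^n) := by
  set w : ℝ[X] := (X - C a) * (X - C b) with hw
  have hdw2 : derivative (derivative w) = 2 := by simp [hw, derivative_mul]; ring
  have base0 : w * derivative (w ^ n) = (n : ℝ[X]) * (derivative w * w ^ n) := by
    rw [derivative_pow]
    have : w * (C (n:ℝ) * w ^ (n-1) * derivative w) = C (n:ℝ) * ((w * w^(n-1)) * derivative w) := by ring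
    rw [this, ← pow_succ', Nat.sub_add_cancel hn, C_eq_natCast]
    ring
  intro k
  induction k with
  | zero =>
    have h := congrArg derivative base0
    simp only [derivative_mul, derivative_natCast, zero_mul, add_zero, hdw2] at h
    simp only [Function.iterate_succ_apply, Function.iterate_zero_apply, Nat.cast_zero]
    linear_combination h
  | succ k ih =>
    have h := congrArg derivative ih
    simp only [derivative_mul, derivative_add, derivative_natCast, derivative_one, zero_mul,
      add_zero, zero_add, mul_zero, zero_mul, hdw2, derivative_ofNat, Nat.succ_eq_add_one,
      ← Function.iterate_succ_apply' derivative] at h ⊢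
    push_cast at h ⊢
    linear_combination h


theorem lyapunov_bound (a b : ℝ) (hab : a < b) (lam : ℝ) (hlam : 0 < lam) (L : ℝ[X])
    (hode : ∀ t : ℝ, (t - a) * (t - b) * eval t (derivative (derivative L))
      + (2*t - a - b) * eval t (derivative L) = lam * eval t L) :
    ∀ t ∈ Icc a b, |eval t L| ≤ max |eval a L| |eval b L| := by
  set f : ℝ → ℝ := fun t => eval t L with hf
  set f' : ℝ → ℝ := fun t => eval t (derivative L) with hf'
  set G : ℝ → ℝ := fun t => (f t)^2 - (t - a) * (t - b) * (f' t)^2 / lam with hG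
  have hGd : ∀ t : ℝ, HasDerivAt G ((2*t - a - b) * (f' t)^2 / lam) t := by
    intro t
    have h1 : HasDerivAt f (f' t) t := Polynomial.hasDerivAt L t
    have h2 : HasDerivAt f' (eval t (derivative (derivative L))) t :=
      Polynomial.hasDerivAt (derivative L) t
    have h3 : HasDerivAt (fun t => (t - a) * (t - b)) ((t - b) + (t - a)) t := by
      simpa using ((hasDerivAt_id t).sub_const a).fun_mul ((hasDerivAt_id t).sub_const b)
    have hc : HasDerivAt G ((f' t * f t + f t * f' t)
        - (((t - b) + (t - a)) * (f' t)^2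
          + (t-a)*(t-b) * (eval t (derivative (derivative L)) * f' t
            + f' t * eval t (derivative (derivative L)))) / lam) t := by
      have := ((h1.fun_mul h1).fun_sub (((h3.fun_mul (h2.fun_mul h2)).div_const lam)))
      convert this using 1
      · rfl
      · rfl
      all_goals simp [hG, sq] <;> ring
    convert hc using 1
    have key := hode t
    field_simp
    linear_combination (2 * f' t) * key
  have hGcont : Continuous G := by
    rw [continuous_iff_continuousAt]; exact fun t => (hGd t).continuousAt
  set m : ℝ := (a + b) / 2 with hm
  have ham : a ≤ m := by simp [hm]; linarith
  have hmb : m ≤ b := by simp [hm]; linarith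
  have hanti : AntitoneOn G (Icc a m) := by
    apply antitoneOn_of_deriv_nonpos (convex_Icc a m) hGcont.continuousOn
      (fun x _ => (hGd x).differentiableAt.differentiableWithinAt)
    intro x hx
    rw [interior_Icc] at hx
    rw [(hGd x).deriv]
    apply div_nonpos_of_nonpos_of_nonneg _ hlam.le
    apply mul_nonpos_of_nonpos_of_nonneg _ (sq_nonneg _)
    have := hx.2; simp [hm] at this; linarith
  have hmono : MonotoneOn G (Icc m b) := by
    apply monotoneOn_of_deriv_nonneg (convex_Icc m b) hGcont.continuousOn
      (fun x _ => (hGd x).differentiableAt.differentiableWithinAt)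
    intro x hx
    rw [interior_Icc] at hx
    rw [(hGd x).deriv]
    apply div_nonneg _ hlam.le
    apply mul_nonneg _ (sq_nonneg _)
    have := hx.1; simp [hm] at this; linarith
  intro t ht
  have hfle : (f t)^2 ≤ G t := by
    have h1 : (t - a) * (t - b) ≤ 0 :=
      mul_nonpos_of_nonneg_of_nonpos (by linarith [ht.1]) (by linarith [ht.2])
    have h2 : 0 ≤ -((t - a) * (t - b) * (f' t)^2) / lam :=
      div_nonneg (by nlinarith [sq_nonneg (f' t)]) hlam.le
    simp only [hG]
    have : (t-a)*(t-b)*(f' t)^2/lam = -(-((t - a) * (t - b) * (f' t)^2) / lam) := by ring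
    rw [this]
    linarith
  have hGa : G a = (f a)^2 := by simp [hG]
  have hGb : G b = (f b)^2 := by simp [hG]
  have hend : (f t)^2 ≤ (max |eval a L| |eval b L|)^2 := by
    rcases le_total t m with hc | hc
    · have := hanti ⟨le_rfl, ham⟩ ⟨ht.1, hc⟩ ht.1
      have h3 : (f a)^2 ≤ (max |eval a L| |eval b L|)^2 := by
        have : |f a| ≤ max |eval a L| |eval b L| := le_max_left _ _
        nlinarith [abs_nonneg (f a), sq_abs (f a)]
      linarith [hGa ▸ this, hfle]
    · have := hmono ⟨hc, ht.2⟩ ⟨hmb, le_rfl⟩ ht.2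
      have h3 : (f b)^2 ≤ (max |eval a L| |eval b L|)^2 := by
        have : |f b| ≤ max |eval a L| |eval b L| := le_max_right _ _
        nlinarith [abs_nonneg (f b), sq_abs (f b)]
      linarith [hGb ▸ this, hfle]
  exact abs_le.mpr (abs_le_of_sq_le_sq' hend (le_trans (abs_nonneg _) (le_max_left _ _)))


theorem ortho_iter (a b : ℝ) : ∀ (n : ℕ) (u s : ℝ[X]),
    (∀ k, k < n → eval a ((⇑derivative)^[k] u) = 0 ∧ eval b ((⇑derivative)^[k] u) = 0) →
    s.natDegree < n →
    ∫ t in a..b, eval t ((⇑derivative)^[n] u) * eval t s = 0 := by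
  intro n
  induction n with
  | zero => exact fun u s _ h => absurd h (Nat.not_lt_zero _)
  | succ n ih =>
    intro u s hbd hdeg
    have hibp := integral_deriv_mul_eq_sub
      (u := fun t => eval t ((⇑derivative)^[n] u)) (v := fun t => eval t s)
      (u' := fun t => eval t ((⇑derivative)^[n+1] u)) (v' := fun t => eval t (derivative s))
      (fun x _ => by
        simpa [Function.iterate_succ_apply'] using Polynomial.hasDerivAt ((⇑derivative)^[n] u) x)
      (fun x _ => Polynomial.hasDerivAt s x)
      (((⇑derivative)^[n+1] u).continuous_aeval.intervalIntegrable a b)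
      ((derivative s).continuous_aeval.intervalIntegrable a b)
    simp only [(hbd n (Nat.lt_succ_self n)).1, (hbd n (Nat.lt_succ_self n)).2, zero_mul,
      sub_zero, sub_self] at hibp
    have hsplit : ∫ (x : ℝ) in a..b, (eval x ((⇑derivative)^[n+1] u) * eval x s +
        eval x ((⇑derivative)^[n] u) * eval x (derivative s))
        = (∫ (x : ℝ) in a..b, eval x ((⇑derivative)^[n+1] u) * eval x s)
          + ∫ (x : ℝ) in a..b, eval x ((⇑derivative)^[n] u) * eval x (derivative s) := by
      apply intervalIntegral.integral_add
      · exact ((((⇑derivative)^[n+1] u).continuous_aeval).mul s.continuous_aeval).intervalIntegrable a b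
      · exact ((((⇑derivative)^[n] u).continuous_aeval).mul (derivative s).continuous_aeval).intervalIntegrable a b
    rw [hsplit] at hibp
    have hsecond : ∫ (x : ℝ) in a..b, eval x ((⇑derivative)^[n] u) * eval x (derivative s) = 0 := by
      by_cases hs : derivative s = 0
      · simp [hs]
      · apply ih u (derivative s) (fun k hk => hbd k (Nat.lt_succ_of_lt hk))
        have h1 : s.natDegree ≠ 0 := by
          intro h0
          exact hs (natDegree_eq_zero.mp h0 |>.choose_spec ▸ derivative_C)
        have := natDegree_derivative_lt h1
        omega
    linarith [hibp, hsecond]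


noncomputable def LegP (a b : ℝ) (n : ℕ) : ℝ[X] :=
  (⇑derivative)^[n] (((X - C a) * (X - C b)) ^ n)

theorem LegP_eval_b (a b : ℝ) (n : ℕ) : eval b (LegP a b n) = n.factorial * (b - a) ^ n := by
  have h : ((X - C a) * (X - C b)) ^ n = (X - C b) ^ n * (X - C a) ^ n := by
    rw [mul_pow, mul_comm]
  rw [LegP, h, eval_iter_deriv_root_mul b n ((X - C a) ^ n)]
  simp

theorem LegP_eval_a (a b : ℝ) (n : ℕ) : eval a (LegP a b n) = n.factorial * (a - b) ^ n := by
  have h : ((X - C a) * (X - C b)) ^ n = (X - C a) ^ n * (X - C b) ^ n := by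
    rw [mul_pow]
  rw [LegP, h, eval_iter_deriv_root_mul a n ((X - C b) ^ n)]
  simp

theorem LegP_monic_aux (a b : ℝ) (n : ℕ) : (((X - C a) * (X - C b)) ^ n).Monic :=
  ((monic_X_sub_C a).mul (monic_X_sub_C b)).pow n

theorem LegP_aux_natDegree (a b : ℝ) (n : ℕ) :
    (((X - C a) * (X - C b)) ^ n).natDegree = 2 * n := by
  rw [Monic.natDegree_pow (by exact (monic_X_sub_C a).mul (monic_X_sub_C b))]
  rw [Monic.natDegree_mul (monic_X_sub_C a) (monic_X_sub_C b)]
  simp [natDegree_X_sub_C]; ring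

theorem LegP_natDegree_le (a b : ℝ) (n : ℕ) : (LegP a b n).natDegree ≤ n := by
  have := Polynomial.natDegree_iterate_derivative (((X - C a) * (X - C b)) ^ n) n
  rw [LegP_aux_natDegree] at this
  rw [LegP]; omega

theorem LegP_coeff_ne (a b : ℝ) (n : ℕ) : (LegP a b n).coeff n ≠ 0 := by
  rw [LegP, Polynomial.coeff_iterate_derivative]
  have h2 : (((X - C a) * (X - C b)) ^ n).coeff (n + n) = 1 := by
    have := (LegP_monic_aux a b n).coeff_natDegree
    rwa [LegP_aux_natDegree, two_mul] at this
  rw [h2, nsmul_eq_mul, mul_one]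
  have : (n + n).descFactorial n ≠ 0 := by
    rw [Ne, Nat.descFactorial_eq_zero_iff_lt]; omega
  exact Nat.cast_ne_zero.mpr this

theorem LegP_ode (a b : ℝ) (n : ℕ) (hn : 1 ≤ n) (t : ℝ) :
    (t-a)*(t-b) * eval t (derivative (derivative (LegP a b n)))
      + (2*t - a - b) * eval t (derivative (LegP a b n))
      = (n*(n+1) : ℝ) * eval t (LegP a b n) := by
  have E := congrArg (eval t) (ode_aux a b n hn n)
  have h2 : (⇑derivative)^[n+2] (((X - C a) * (X - C b))^n)
      = derivative (derivative (LegP a b n)) := by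
    rw [LegP]; simp only [show n+2 = (n+1)+1 from rfl, Function.iterate_succ_apply']
  have h1 : (⇑derivative)^[n+1] (((X - C a) * (X - C b))^n) = derivative (LegP a b n) := by
    rw [LegP]; simp only [Function.iterate_succ_apply']
  rw [h2, h1] at E
  simp only [derivative_mul, derivative_X_sub_C, eval_add, eval_mul, eval_sub, eval_X, eval_C,
    eval_natCast, eval_one, eval_ofNat, one_mul, mul_one, LegP] at E ⊢
  push_cast at E ⊢
  linear_combination E


theorem LegP_ortho (a b : ℝ) (n : ℕ) (s : ℝ[X]) (h : s.natDegree < n) :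
    ∫ t in a..b, eval t (LegP a b n) * eval t s = 0 := by
  apply ortho_iter
  · intro k hk
    constructor
    · apply eval_iter_deriv_zero a k n
      · rw [mul_pow]; exact dvd_mul_right _ _
      · exact hk
    · apply eval_iter_deriv_zero b k n
      · rw [mul_pow]; exact dvd_mul_left _ _
      · exact hk
  · exact h

theorem LegP_bound (a b : ℝ) (hab : a < b) (n : ℕ) (hn : 1 ≤ n) :
    ∀ t ∈ Set.Icc a b, |eval t (LegP a b n)| ≤ n.factorial * (b-a)^n := by
  have hn' : (1:ℝ) ≤ n := by exact_mod_cast hn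
  have hpos : (0:ℝ) < n*(n+1) := by nlinarith
  have h := lyapunov_bound a b hab _ hpos (LegP a b n) (LegP_ode a b n hn)
  intro t ht
  refine (h t ht).trans_eq ?_
  rw [LegP_eval_a, LegP_eval_b, abs_mul, abs_mul,
    abs_of_nonneg (by positivity : (0:ℝ) ≤ (n.factorial : ℝ)), abs_pow, abs_pow,
    abs_sub_comm a b, abs_of_pos (sub_pos.mpr hab), max_self]

theorem scalar_bound (p : ℕ) (hp : 2 ≤ p) (a b : ℝ) (hab : a < b) (G : ℝ[X])
    (hdeg : G.natDegree ≤ p) (hGb : eval b G = 0)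
    (horth : ∀ s : ℝ[X], s.natDegree ≤ p - 2 → ∫ t in a..b, eval t G * eval t s = 0) :
    ∀ t ∈ Icc a b, |eval t G| ≤ |eval a G| := by
  have hba : (0:ℝ) < b - a := by linarith
  set P := LegP a b p with hP
  set Q := LegP a b (p-1) with hQ
  have hPc : P.coeff p ≠ 0 := LegP_coeff_ne a b p
  have hQc : Q.coeff (p-1) ≠ 0 := LegP_coeff_ne a b (p-1)
  set α : ℝ := G.coeff p / P.coeff p with hα
  set β : ℝ := (G.coeff (p-1) - α * P.coeff (p-1)) / Q.coeff (p-1) with hβ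
  set r : ℝ[X] := G - C α * P - C β * Q with hr
  have hQdeg : Q.natDegree ≤ p - 1 := LegP_natDegree_le a b (p-1)
  have hPdeg : P.natDegree ≤ p := LegP_natDegree_le a b p
  have hrdeg : r.natDegree ≤ p - 2 := by
    rw [natDegree_le_iff_coeff_eq_zero]
    intro m hm
    have hQp : ∀ k, p - 1 < k → Q.coeff k = 0 :=
      fun k hk => coeff_eq_zero_of_natDegree_lt (lt_of_le_of_lt hQdeg hk)
    rcases eq_or_lt_of_le (show p - 1 ≤ m by omega) with hm1 | hm1
    · subst hm1
      simp only [hr, coeff_sub, coeff_C_mul]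
      rw [hβ]
      field_simp
      ring
    · rcases eq_or_lt_of_le (show p ≤ m by omega) with hm2 | hm2
      · subst hm2
        simp only [hr, coeff_sub, coeff_C_mul]
        rw [hQp p (by omega), hα]
        field_simp
        ring
      · simp only [hr, coeff_sub, coeff_C_mul]
        rw [hQp m (by omega), coeff_eq_zero_of_natDegree_lt (lt_of_le_of_lt hPdeg hm2),
          coeff_eq_zero_of_natDegree_lt (lt_of_le_of_lt hdeg hm2)]
        ring
  have hrint : ∫ t in a..b, eval t r * eval t r = 0 := by
    have e1 : ∫ t in a..b, eval t G * eval t r = 0 := horth r hrdeg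
    have e2 : ∫ t in a..b, eval t P * eval t r = 0 := LegP_ortho a b p r (by omega)
    have e3 : ∫ t in a..b, eval t Q * eval t r = 0 := LegP_ortho a b (p-1) r (by omega)
    have key : ∫ t in a..b, eval t r * eval t r
        = (∫ t in a..b, eval t G * eval t r) - (α * ∫ t in a..b, eval t P * eval t r)
          - (β * ∫ t in a..b, eval t Q * eval t r) := by
      rw [← intervalIntegral.integral_const_mul, ← intervalIntegral.integral_const_mul, ← intervalIntegral.integral_sub (by
          exact ((G.continuous_aeval.mul r.continuous_aeval)).intervalIntegrable a b) (by
          exact (continuous_const.mul (P.continuous_aeval.mul r.continuous_aeval)).intervalIntegrable a b),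
        ← intervalIntegral.integral_sub (by
          apply Continuous.intervalIntegrable
          exact (G.continuous_aeval.mul r.continuous_aeval).sub
            (continuous_const.mul (P.continuous_aeval.mul r.continuous_aeval))) (by
          exact (continuous_const.mul (Q.continuous_aeval.mul r.continuous_aeval)).intervalIntegrable a b)]
      apply integral_congr
      intro t _
      simp only [hr, eval_sub, eval_mul, eval_C]
      ring
    rw [key, e1, e2, e3]; ring
  have hr0 : r = 0 := by
    by_contra hne
    have hcont : Continuous fun t => eval t r * eval t r :=
      r.continuous_aeval.mul r.continuous_aeval
    have hIoc := hrint
    rw [integral_of_le hab.le] at hIoc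
    have hint : IntegrableOn (fun t => eval t r * eval t r) (Ioc a b) volume :=
      hcont.integrableOn_Ioc
    have hae := (integral_eq_zero_iff_of_nonneg (fun t => mul_self_nonneg _) hint).mp hIoc
    have hmeas : MeasurableSet {t : ℝ | ¬ eval t r * eval t r = 0} :=
      (isOpen_ne_fun hcont continuous_const).measurableSet
    have hnull : volume ({t : ℝ | ¬ eval t r * eval t r = 0} ∩ Ioc a b) = 0 := by
      have h0 := ae_iff.mp hae
      simp only [Pi.zero_apply] at h0
      rwa [Measure.restrict_apply hmeas] at h0
    have hsub : Ioc a b ⊆ ({t : ℝ | ¬ eval t r * eval t r = 0} ∩ Ioc a b) ∪ {x | r.IsRoot x} := by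
      intro t ht
      by_cases h : eval t r = 0
      · exact Or.inr h
      · exact Or.inl ⟨fun hc => h (mul_self_eq_zero.mp hc), ht⟩
    have hroot : volume {x : ℝ | r.IsRoot x} = 0 :=
      (Polynomial.finite_setOf_isRoot hne).measure_zero _
    have : volume (Ioc a b) = 0 := by
      refine le_antisymm ?_ zero_le
      calc volume (Ioc a b) ≤ volume (({t : ℝ | ¬ eval t r * eval t r = 0} ∩ Ioc a b)
          ∪ {x | r.IsRoot x}) := measure_mono hsub
        _ ≤ volume ({t : ℝ | ¬ eval t r * eval t r = 0} ∩ Ioc a b) + volume {x | r.IsRoot x} :=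
          measure_union_le _ _
        _ = 0 := by rw [hnull, hroot, add_zero]
    rw [Real.volume_Ioc] at this
    simp only [ENNReal.ofReal_eq_zero] at this
    linarith
  have hGfun : ∀ t, eval t G = α * eval t P + β * eval t Q := by
    intro t
    have hGPQ : G = C α * P + C β * Q := by
      have h := hr0
      rw [hr] at h
      linear_combination h
    rw [hGPQ]
    simp [eval_add, eval_mul, eval_C]
  have hfacP : (0:ℝ) < p.factorial * (b-a)^p := by
    have h1 : (0:ℝ) < p.factorial := by exact_mod_cast p.factorial_pos
    have h2 : (0:ℝ) < (b-a)^p := by positivity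
    positivity
  have hfacQ : (0:ℝ) < (p-1).factorial * (b-a)^(p-1) := by
    have h1 : (0:ℝ) < (p-1).factorial := by exact_mod_cast (p-1).factorial_pos
    have h2 : (0:ℝ) < (b-a)^(p-1) := by positivity
    positivity
  set A : ℝ := α * (p.factorial * (b-a)^p) with hA
  set B : ℝ := β * ((p-1).factorial * (b-a)^(p-1)) with hB
  have hsum : A + B = 0 := by
    have h := hGfun b
    rw [hGb, hP, hQ, LegP_eval_b, LegP_eval_b] at h
    rw [hA, hB]; linarith
  have hGa : eval a G = (-1:ℝ)^p * A + (-1:ℝ)^(p-1) * B := by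
    have h := hGfun a
    rw [hP, hQ, LegP_eval_a, LegP_eval_a] at h
    have e1 : (a-b)^p = (-1:ℝ)^p * (b-a)^p := by
      rw [show a-b = -(b-a) by ring, neg_pow]
    have e2 : (a-b)^(p-1) = (-1:ℝ)^(p-1) * (b-a)^(p-1) := by
      rw [show a-b = -(b-a) by ring, neg_pow]
    rw [h, e1, e2, hA, hB]
    ring
  have habs : |eval a G| = |A| + |B| := by
    have hBA : B = -A := by linarith
    have hpow : (-1:ℝ)^(p-1) = -(-1:ℝ)^p := by
      rw [show p = (p-1)+1 by omega, pow_succ]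
      simp [pow_succ, mul_neg_one]
    rw [hGa, hBA, hpow]
    have : (-1:ℝ)^p * A + -(-1:ℝ)^p * -A = (-1:ℝ)^p * (2*A) := by ring
    rw [this, abs_mul, abs_pow, abs_neg, abs_one, one_pow, one_mul, abs_neg, abs_mul]
    rw [show |(2:ℝ)| = 2 by norm_num]
    ring
  intro t ht
  have h1 := LegP_bound a b hab p (by omega) t ht
  have h2 := LegP_bound a b hab (p-1) (by omega) t ht
  calc |eval t G| = |α * eval t P + β * eval t Q| := by rw [hGfun]
    _ ≤ |α * eval t P| + |β * eval t Q| := abs_add_le _ _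
    _ = |α| * |eval t P| + |β| * |eval t Q| := by rw [abs_mul, abs_mul]
    _ ≤ |α| * (p.factorial * (b-a)^p) + |β| * ((p-1).factorial * (b-a)^(p-1)) :=
        add_le_add (mul_le_mul_of_nonneg_left (hP ▸ h1) (abs_nonneg α))
          (mul_le_mul_of_nonneg_left (hQ ▸ h2) (abs_nonneg β))
    _ = |A| + |B| := by
        simp only [hA, hB, abs_mul, abs_of_pos hfacP, abs_of_pos hfacQ]
    _ = |eval a G| := habs.symm

-- antiderivative existence
theorem exists_antideriv (s : ℝ[X]) : ∃ r : ℝ[X], derivative r = s ∧ r.natDegree ≤ s.natDegree + 1 := by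
  refine ⟨∑ k ∈ Finset.range (s.natDegree + 1), C (s.coeff k / (k+1)) * X^(k+1), ?_, ?_⟩
  · rw [map_sum]
    conv_rhs => rw [s.as_sum_range]
    apply Finset.sum_congr rfl
    intro k _
    rw [derivative_C_mul_X_pow, C_mul_X_pow_eq_monomial]
    congr 1
    field_simp
    simp
  · apply Polynomial.natDegree_sum_le_of_forall_le
    intro k hk
    apply le_trans (natDegree_C_mul_X_pow_le _ _)
    simp at hk; omega

/-- Exact identity for the sup norm of the derivative of the reconstruction error:
`‖(V - V̂)'‖_{L^∞(Iₙ;X)} = ‖J‖`. -/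
theorem reconstruction_derivative_sup_identity
    {X : Type} [NormedAddCommGroup X] [InnerProductSpace ℝ X] [CompleteSpace X]
    (p : ℕ) (a b : ℝ) (hab : a < b)
    (V V' V'' Vh Vh' Vh'' : ℝ → X) (J : X)
    (hVpoly : IsPolyDeg p V) (hVhpoly : IsPolyDeg (p + 1) Vh)
    (hV' : ∀ t, HasDerivAt V (V' t) t) (hV'' : ∀ t, HasDerivAt V' (V'' t) t)
    (hVh' : ∀ t, HasDerivAt Vh (Vh' t) t) (hVh'' : ∀ t, HasDerivAt Vh' (Vh'' t) t)
    (hmom : ∀ q : ℝ → X, IsPolyDeg (p - 1) q →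
      ∫ t in Set.Ioc a b, (inner ℝ (Vh'' t) (q t) : ℝ)
        = (∫ t in Set.Ioc a b, (inner ℝ (V'' t) (q t) : ℝ)) + (inner ℝ J (q a) : ℝ))
    (hinit : Vh a = V a) (hinit' : Vh' a = V' a - J)
    (hp : 2 ≤ p) :
    sSup ((fun t => ‖V' t - Vh' t‖) '' Set.Icc a b) = ‖J‖ := by
  obtain ⟨c, hc⟩ := hVpoly
  obtain ⟨ch, hch⟩ := hVhpoly
  -- first derivative representations
  have hV'rep : ∀ t, V' t = ∑ k ∈ Finset.range (p+1), ((k:ℝ) * t^(k-1)) • c k := by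
    intro t
    refine (hV' t).unique ?_
    rw [funext hc]
    exact HasDerivAt.fun_sum (fun k _ => (hasDerivAt_pow k t).smul_const (c k))
  have hVh'rep : ∀ t, Vh' t = ∑ k ∈ Finset.range (p+2), ((k:ℝ) * t^(k-1)) • ch k := by
    intro t
    refine (hVh' t).unique ?_
    have : Vh = fun t => ∑ k ∈ Finset.range (p+1+1), t ^ k • ch k := funext hch
    rw [this]
    exact HasDerivAt.fun_sum (fun k _ => (hasDerivAt_pow k t).smul_const (ch k))
  -- second derivative representations
  have hV''rep : ∀ t, V'' t = ∑ k ∈ Finset.range (p+1),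
      ((k:ℝ) * (((k-1:ℕ):ℝ) * t^(k-1-1))) • c k := by
    intro t
    refine (hV'' t).unique ?_
    rw [funext hV'rep]
    exact HasDerivAt.fun_sum (fun k _ => ((hasDerivAt_pow (k-1) t).const_mul (k:ℝ)).smul_const (c k))
  have hVh''rep : ∀ t, Vh'' t = ∑ k ∈ Finset.range (p+2),
      ((k:ℝ) * (((k-1:ℕ):ℝ) * t^(k-1-1))) • ch k := by
    intro t
    refine (hVh'' t).unique ?_
    rw [funext hVh'rep]
    exact HasDerivAt.fun_sum (fun k _ => ((hasDerivAt_pow (k-1) t).const_mul (k:ℝ)).smul_const (ch k))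
  have hV''cont : Continuous V'' := by
    rw [funext hV''rep]
    exact continuous_finset_sum _ fun k _ =>
      (continuous_const.mul (continuous_const.mul (continuous_pow (k-1-1)))).smul continuous_const
  have hVh''cont : Continuous Vh'' := by
    rw [funext hVh''rep]
    exact continuous_finset_sum _ fun k _ =>
      (continuous_const.mul (continuous_const.mul (continuous_pow (k-1-1)))).smul continuous_const
  set D : ℝ → X := fun t => V' t - Vh' t with hD
  have hDa : D a = J := by rw [hD]; simp [hinit']
  have hDd : ∀ t, HasDerivAt D (V'' t - Vh'' t) t := fun t => (hV'' t).sub (hVh'' t)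
  -- key scalar bound
  have key : ∀ x : X, ∀ t ∈ Set.Icc a b, |(inner ℝ (D t) x : ℝ)| ≤ |(inner ℝ J x : ℝ)| := by
    intro x
    set Gx : ℝ[X] := (∑ k ∈ Finset.range (p+1), C ((k:ℝ) * (inner ℝ (c k) x : ℝ)) * Polynomial.X^(k-1))
        - ∑ k ∈ Finset.range (p+2), C ((k:ℝ) * (inner ℝ (ch k) x : ℝ)) * Polynomial.X^(k-1) with hGx
    have hGxdeg : Gx.natDegree ≤ p := by
      rw [hGx]
      apply le_trans (natDegree_sub_le _ _)
      apply max_le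
      · apply Polynomial.natDegree_sum_le_of_forall_le
        intro k hk
        apply le_trans (natDegree_C_mul_X_pow_le _ _)
        simp at hk
        omega
      · apply Polynomial.natDegree_sum_le_of_forall_le
        intro k hk
        apply le_trans (natDegree_C_mul_X_pow_le _ _)
        simp at hk
        omega
    have hGxeval : ∀ t, (inner ℝ (D t) x : ℝ) = eval t Gx := by
      intro t
      have e1 : (inner ℝ (V' t) x : ℝ)
          = ∑ k ∈ Finset.range (p+1), ((k:ℝ) * (inner ℝ (c k) x : ℝ)) * t^(k-1) := by
        rw [hV'rep t, sum_inner]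
        refine Finset.sum_congr rfl fun k _ => ?_
        rw [real_inner_smul_left]
        ring
      have e2 : (inner ℝ (Vh' t) x : ℝ)
          = ∑ k ∈ Finset.range (p+2), ((k:ℝ) * (inner ℝ (ch k) x : ℝ)) * t^(k-1) := by
        rw [hVh'rep t, sum_inner]
        refine Finset.sum_congr rfl fun k _ => ?_
        rw [real_inner_smul_left]
        ring
      rw [hD]
      simp only [inner_sub_left, e1, e2, hGx, eval_sub, eval_finset_sum, eval_mul, eval_C,
        eval_pow, eval_X]
    have hGaJ : eval a Gx = (inner ℝ J x : ℝ) := by rw [← hGxeval a, hDa]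
    have hGx' : ∀ t, (inner ℝ (V'' t - Vh'' t) x : ℝ) = eval t (derivative Gx) := by
      intro t
      have h1 : HasDerivAt (fun t => (inner ℝ (D t) x : ℝ)) (inner ℝ (V'' t - Vh'' t) x) t := by
        have := ((hDd t).inner ℝ (hasDerivAt_const t x))
        simpa using this
      have h2 : HasDerivAt (fun t => (inner ℝ (D t) x : ℝ)) (eval t (derivative Gx)) t := by
        rw [funext hGxeval]
        exact Gx.hasDerivAt t
      exact h1.unique h2
    -- moment conditions
    have hmomGx : ∀ r : ℝ[X], r.natDegree ≤ p - 1 →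
        ∫ t in a..b, eval t (derivative Gx) * eval t r = -(eval a Gx * eval a r) := by
      intro r hr
      set q : ℝ → X := fun t => eval t r • x with hq
      have hqpoly : IsPolyDeg (p - 1) q := by
        refine ⟨fun k => r.coeff k • x, fun t => ?_⟩
        show eval t r • x = _
        rw [eval_eq_sum_range' (n := p) (by omega) t]
        rw [show p - 1 + 1 = p by omega, Finset.sum_smul]
        exact Finset.sum_congr rfl fun k _ => by rw [smul_smul, mul_comm]
      have hmq := hmom q hqpoly
      have hint1 : IntegrableOn (fun t => (inner ℝ (V'' t) (q t) : ℝ)) (Set.Ioc a b) volume :=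
        (hV''cont.inner ((r.continuous_aeval).smul continuous_const)).integrableOn_Ioc
      have hint2 : IntegrableOn (fun t => (inner ℝ (Vh'' t) (q t) : ℝ)) (Set.Ioc a b) volume :=
        (hVh''cont.inner ((r.continuous_aeval).smul continuous_const)).integrableOn_Ioc
      have hfun : (fun t => eval t (derivative Gx) * eval t r)
          = fun t => (inner ℝ (V'' t) (q t) : ℝ) - (inner ℝ (Vh'' t) (q t) : ℝ) := by
        funext t
        rw [hq]
        simp only [real_inner_smul_right]
        rw [← hGx' t, inner_sub_left]
        ring
      rw [integral_of_le hab.le, hfun, integral_sub hint1 hint2, hmq]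
      rw [hq]
      simp only [real_inner_smul_right]
      rw [hGaJ]
      ring
    -- eval b Gx = 0
    have hftc : ∫ t in a..b, eval t (derivative Gx) = eval b Gx - eval a Gx := by
      apply integral_eq_sub_of_hasDerivAt (fun t _ => Gx.hasDerivAt t)
      exact ((derivative Gx).continuous_aeval).intervalIntegrable a b
    have hGb0 : eval b Gx = 0 := by
      have h1 := hmomGx 1 (by simp)
      simp only [eval_one, mul_one] at h1
      rw [hftc] at h1
      linarith
    -- orthogonality
    have horth : ∀ s : ℝ[X], s.natDegree ≤ p - 2 → ∫ t in a..b, eval t Gx * eval t s = 0 := by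
      intro s hs
      obtain ⟨r, hrd, hrdeg⟩ := exists_antideriv s
      have hrdeg' : r.natDegree ≤ p - 1 := by omega
      have hibp := integral_deriv_mul_eq_sub
        (u := fun t => eval t Gx) (v := fun t => eval t r)
        (u' := fun t => eval t (derivative Gx)) (v' := fun t => eval t s)
        (fun t _ => Gx.hasDerivAt t)
        (fun t _ => by
          have := r.hasDerivAt t
          rwa [hrd] at this)
        (((derivative Gx).continuous_aeval).intervalIntegrable a b)
        ((s.continuous_aeval).intervalIntegrable a b)
      have hsplit : ∫ t in a..b, (eval t (derivative Gx) * eval t r + eval t Gx * eval t s)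
          = (∫ t in a..b, eval t (derivative Gx) * eval t r)
            + ∫ t in a..b, eval t Gx * eval t s := by
        apply intervalIntegral.integral_add
        · exact (((derivative Gx).continuous_aeval).mul r.continuous_aeval).intervalIntegrable a b
        · exact ((Gx.continuous_aeval).mul s.continuous_aeval).intervalIntegrable a b
      simp only [hGb0, zero_mul] at hibp
      rw [hsplit, hmomGx r hrdeg'] at hibp
      linarith [hibp]
    intro t ht
    have hb := scalar_bound p hp a b hab Gx hGxdeg hGb0 horth t ht
    rw [← hGxeval t, hGaJ] at hb
    exact hb
  -- norm bound
  have hbound : ∀ t ∈ Set.Icc a b, ‖D t‖ ≤ ‖J‖ := by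
    intro t ht
    rcases eq_or_ne (D t) 0 with h0 | h0
    · rw [h0]; simp
    · have h1 := key (D t) t ht
      have h2 : |(inner ℝ J (D t) : ℝ)| ≤ ‖J‖ * ‖D t‖ := abs_real_inner_le_norm J (D t)
      have h3 : (inner ℝ (D t) (D t) : ℝ) = ‖D t‖^2 := real_inner_self_eq_norm_sq (D t)
      have h4 : (0:ℝ) < ‖D t‖ := norm_pos_iff.mpr h0
      rw [h3, abs_of_nonneg (by positivity)] at h1
      nlinarith
  -- sup computation
  have hmemJ : ‖J‖ ∈ (fun t => ‖V' t - Vh' t‖) '' Set.Icc a b := by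
    refine ⟨a, ⟨le_rfl, hab.le⟩, ?_⟩
    show ‖V' a - Vh' a‖ = ‖J‖
    rw [show V' a - Vh' a = D a from rfl, hDa]
  apply le_antisymm
  · apply csSup_le ⟨‖J‖, hmemJ⟩
    rintro y ⟨t, ht, rfl⟩
    exact hbound t ht
  · apply le_csSup ⟨‖J‖, ?_⟩ hmemJ
    rintro y ⟨t, ht, rfl⟩
    exact hbound t ht
end

section
/- Legendre tail bound: let w ∈ H¹(-1,1) with Legendre expansion w = Σ_{j≥0} w_j L_j. Then for every p ≥ 1, |Σ_{j≥p} w_j| ≤ C p^{-1/2} ‖w'‖_{L²(-1,1)} for an absolute constant C. -/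
open MeasureTheory Polynomial

/-- The `n`-th Legendre polynomial on `[-1,1]`, via the Rodrigues formula,
normalized so that `legendre n` evaluates to `1` at `1`. -/
noncomputable def legendre (n : ℕ) : Polynomial ℝ :=
  ((2:ℝ) ^ n * (n.factorial : ℝ))⁻¹ • (derivative^[n] ((X ^ 2 - 1 : Polynomial ℝ) ^ n))

namespace LegAux

noncomputable def u : Polynomial ℝ := X ^ 2 - 1

lemma deriv_u : derivative u = C 2 * X := by
  simp [u]; rw [← C_1, ← C_add]; norm_num

lemma dvd_iter (n : ℕ) : ∀ k, k ≤ n → ∃ q, derivative^[k] (u ^ n) = u ^ (n - k) * q := by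
  intro k
  induction k with
  | zero => intro _; exact ⟨1, by simp⟩
  | succ k ih =>
    intro hk
    obtain ⟨q, hq⟩ := ih (Nat.le_of_succ_le hk)
    refine ⟨C ((n - k : ℕ) : ℝ) * (C 2 * X) * q + u * derivative q, ?_⟩
    rw [Function.iterate_succ_apply', hq, derivative_mul, derivative_pow, deriv_u]
    have h1 : n - k = (n - (k+1)) + 1 := by omega
    rw [h1]
    simp only [Nat.add_sub_cancel]
    ring

lemma eval_iter_zero (n k : ℕ) (hk : k < n) (x : ℝ) (hx : x = 1 ∨ x = -1) :
    (derivative^[k] (u ^ n)).eval x = 0 := by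
  obtain ⟨q, hq⟩ := dvd_iter n k hk.le
  have h1 : n - k = (n - k - 1) + 1 := by omega
  have hu : u.eval x = 0 := by rcases hx with rfl | rfl <;> simp [u]
  rw [hq, h1]
  simp [pow_succ, hu]

noncomputable def pint (P : Polynomial ℝ) : ℝ := ∫ t in Set.Icc (-1:ℝ) 1, P.eval t

lemma pint_eq (P : Polynomial ℝ) : pint P = ∫ t in (-1:ℝ)..1, P.eval t := by
  rw [pint, intervalIntegral.integral_of_le (by norm_num : (-1:ℝ) ≤ 1),
    MeasureTheory.integral_Icc_eq_integral_Ioc]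

lemma pint_derivative (Q : Polynomial ℝ) :
    pint (derivative Q) = Q.eval 1 - Q.eval (-1) := by
  rw [pint_eq]
  exact intervalIntegral.integral_eq_sub_of_hasDerivAt
    (fun x _ => Q.hasDerivAt x)
    ((Polynomial.continuous _).intervalIntegrable _ _)

lemma pint_add (P Q : Polynomial ℝ) : pint (P + Q) = pint P + pint Q := by
  simp only [pint, eval_add]
  exact integral_add ((Polynomial.continuous P).integrableOn_Icc)
    ((Polynomial.continuous Q).integrableOn_Icc)

lemma pint_Cmul (c : ℝ) (P : Polynomial ℝ) : pint (C c * P) = c * pint P := by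
  simp only [pint, eval_mul, eval_C]
  exact integral_const_mul c _

lemma pint_smul (c : ℝ) (P : Polynomial ℝ) : pint (c • P) = c * pint P := by
  rw [smul_eq_C_mul, pint_Cmul]

lemma pint_sub (P Q : Polynomial ℝ) : pint (P - Q) = pint P - pint Q := by
  have := pint_add (P - Q) Q
  simp at this; linarith

lemma pint_ibp (A B : Polynomial ℝ) :
    pint (A * derivative B) =
      (A*B).eval 1 - (A*B).eval (-1) - pint (derivative A * B) := by
  have h := pint_derivative (A * B)
  rw [derivative_mul, pint_add] at h
  linarith

lemma pint_one : pint 1 = 2 := by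
  simp [pint]
  norm_num

lemma key (m : ℕ) : derivative (X * u ^ (m+1)) =
    C ((2*m+3 : ℕ) : ℝ) * u ^ (m+1) + C ((2*m+2 : ℕ) : ℝ) * u ^ m := by
  rw [derivative_mul, derivative_pow, derivative_X, u]
  push_cast
  have : derivative (X^2 - 1 : Polynomial ℝ) = C 2 * X := by simp; rw [← C_1, ← C_add]; norm_num
  rw [this]
  simp only [C_add, C_mul, map_ofNat, C_1]
  ring

lemma wallis_rec (m : ℕ) :
    ((2*m+3 : ℕ) : ℝ) * pint (u ^ (m+1)) = -(((2*m+2 : ℕ) : ℝ)) * pint (u ^ m) := by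
  have h := pint_derivative (X * u ^ (m+1))
  rw [key] at h
  rw [pint_add, pint_Cmul, pint_Cmul] at h
  have e1 : (X * u ^ (m+1)).eval 1 = 0 := by simp [u]
  have e2 : (X * u ^ (m+1)).eval (-1) = 0 := by simp [u]
  rw [e1, e2] at h
  linarith

lemma wallis (n : ℕ) : pint (u ^ n) =
    (-1)^n * 2 * 4^n * (n.factorial : ℝ)^2 / ((2*n+1).factorial : ℝ) := by
  induction n with
  | zero => simpa using pint_one
  | succ m ih =>
    have h := wallis_rec m
    rw [ih] at h
    have h3 : ((2*m+3:ℕ):ℝ) ≠ 0 := by positivity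
    have hf : ((2*m+1).factorial : ℝ) ≠ 0 := by positivity
    have hstep : ((2*(m+1)+1).factorial : ℝ)
        = ((2*m+3:ℕ):ℝ) * ((2*m+2:ℕ):ℝ) * ((2*m+1).factorial : ℝ) := by
      have : 2*(m+1)+1 = (2*m+2)+1 := by ring
      rw [this]
      rw [Nat.factorial_succ]
      have : 2*m+2 = (2*m+1)+1 := by ring
      rw [this, Nat.factorial_succ]
      push_cast
      ring
    have hfact : (Nat.factorial (m+1) : ℝ) = ((m:ℝ)+1) * (Nat.factorial m : ℝ) := by
      rw [Nat.factorial_succ]; push_cast; ring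
    field_simp at h
    rw [hstep, hfact, eq_div_iff (by positivity)]
    push_cast at h ⊢
    linear_combination (2*(m:ℝ)+2) * h

lemma iter_add (k : ℕ) (P Q : Polynomial ℝ) :
    derivative^[k] (P + Q) = derivative^[k] P + derivative^[k] Q := by
  induction k with
  | zero => rfl
  | succ k ih => rw [Function.iterate_succ_apply', ih, derivative_add,
      Function.iterate_succ_apply', Function.iterate_succ_apply']

lemma iterate_ibp (n : ℕ) (q : Polynomial ℝ) :
    ∀ k, k ≤ n → pint (q * derivative^[n] (u ^ n)) =
      (-1)^k * pint (derivative^[k] q * derivative^[n-k] (u ^ n)) := by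
  intro k
  induction k with
  | zero => intro _; simp
  | succ k ih =>
    intro hk
    rw [ih (Nat.le_of_succ_le hk)]
    have h1 : n - k = (n - (k+1)) + 1 := by omega
    have h2 : derivative^[n-k] (u ^ n) = derivative (derivative^[n-(k+1)] (u ^ n)) := by
      rw [h1, Function.iterate_succ_apply']
    rw [h2, pint_ibp]
    have hlt : n - (k+1) < n := by omega
    have e1 : (derivative^[k] q * derivative^[n-(k+1)] (u ^ n)).eval 1 = 0 := by
      rw [eval_mul, eval_iter_zero n _ hlt 1 (Or.inl rfl), mul_zero]
    have e2 : (derivative^[k] q * derivative^[n-(k+1)] (u ^ n)).eval (-1) = 0 := by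
      rw [eval_mul, eval_iter_zero n _ hlt (-1) (Or.inr rfl), mul_zero]
    rw [e1, e2, Function.iterate_succ_apply']
    ring

lemma rodrigues_step (m : ℕ) :
    derivative^[m+2] (u ^ (m+2)) =
      C (((2*(m+2))*(2*m+3) : ℕ) : ℝ) * derivative^[m] (u ^ (m+1))
      + C ((4*(m+1)*(m+2) : ℕ) : ℝ) * derivative^[m] (u ^ m) := by
  have h0 : derivative (u ^ (m+2)) = C ((2*(m+2) : ℕ) : ℝ) * (X * u ^ (m+1)) := by
    rw [derivative_pow, u]
    have : derivative (X^2 - 1 : Polynomial ℝ) = C 2 * X := by simp; rw [← C_1, ← C_add]; norm_num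
    rw [this]
    push_cast
    simp only [C_add, C_mul, map_ofNat, C_1]
    ring
  calc derivative^[m+2] (u ^ (m+2))
      = derivative^[m+1] (derivative (u ^ (m+2))) := by
        rw [← Function.iterate_succ_apply]
    _ = derivative^[m+1] (C ((2*(m+2) : ℕ) : ℝ) * (X * u ^ (m+1))) := by rw [h0]
    _ = C ((2*(m+2) : ℕ) : ℝ) * derivative^[m+1] (X * u ^ (m+1)) := by
        rw [Polynomial.iterate_derivative_C_mul]
    _ = C ((2*(m+2) : ℕ) : ℝ) * derivative^[m] (derivative (X * u ^ (m+1))) := by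
        rw [← Function.iterate_succ_apply]
    _ = C ((2*(m+2) : ℕ) : ℝ) * (C ((2*m+3 : ℕ) : ℝ) * derivative^[m] (u ^ (m+1))
          + C ((2*m+2 : ℕ) : ℝ) * derivative^[m] (u ^ m)) := by
        rw [key m, iter_add, Polynomial.iterate_derivative_C_mul,
          Polynomial.iterate_derivative_C_mul]
    _ = _ := by
        rw [mul_add, ← mul_assoc, ← mul_assoc, ← C_mul, ← C_mul, ← Nat.cast_mul, ← Nat.cast_mul]
        have a1 : 2*(m+2)*(2*m+3) = (2*(m+2))*(2*m+3) := by ring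
        have a2 : 2*(m+2)*(2*m+2) = 4*(m+1)*(m+2) := by ring
        rw [a1, a2]

lemma legendre_eq (n : ℕ) :
    legendre n = ((2:ℝ)^n * (n.factorial:ℝ))⁻¹ • derivative^[n] (u ^ n) := rfl

lemma u_natDegree : u.natDegree = 2 := by
  rw [u]
  compute_degree!

lemma u_monic : u.Monic := by
  have : u = X^2 - C 1 := by rw [u]; simp
  rw [this]
  exact monic_X_pow_sub_C 1 (by norm_num)

lemma natDegree_iter_le (n : ℕ) : (derivative^[n] (u ^ n)).natDegree ≤ n := by
  have h := natDegree_iterate_derivative (u ^ n) n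
  have h2 : (u ^ n).natDegree = 2 * n := by
    rw [u_monic.natDegree_pow, u_natDegree]; ring
  omega

lemma coeff_iter (n : ℕ) : (derivative^[n] (u ^ n)).coeff n = ((2*n).descFactorial n : ℝ) := by
  rw [Polynomial.coeff_iterate_derivative]
  have h2 : (u ^ n).coeff (n + n) = 1 := by
    have : n + n = (u ^ n).natDegree := by
      rw [u_monic.natDegree_pow, u_natDegree]; ring
    rw [this]
    exact (u_monic.pow n).coeff_natDegree
  rw [h2]
  have : n + n = 2 * n := by ring
  rw [this]
  simp

lemma iter_top (P : Polynomial ℝ) (n : ℕ) (h : P.natDegree ≤ n) :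
    derivative^[n] P = C ((n.factorial : ℝ) * P.coeff n) := by
  have hd : (derivative^[n] P).natDegree = 0 := by
    have := natDegree_iterate_derivative P n
    omega
  rw [eq_C_of_natDegree_eq_zero hd]
  congr 1
  rw [Polynomial.coeff_iterate_derivative]
  simp [Nat.descFactorial_self, mul_comm]

lemma norm_legendre (n : ℕ) :
    pint (legendre n * legendre n) = 2 / (2 * (n:ℝ) + 1) := by
  set c : ℝ := ((2:ℝ)^n * (n.factorial:ℝ))⁻¹ with hc
  have hLdeg : (legendre n).natDegree ≤ n := by
    rw [legendre_eq]
    refine le_trans (natDegree_smul_le _ _) (natDegree_iter_le n)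
  have hLcoeff : (legendre n).coeff n = c * ((2*n).descFactorial n : ℝ) := by
    rw [legendre_eq, coeff_smul, coeff_iter, smul_eq_mul]
  have step1 : pint (legendre n * legendre n) =
      c * pint (legendre n * derivative^[n] (u ^ n)) := by
    nth_rewrite 2 [legendre_eq]
    rw [mul_smul_comm, pint_smul]
  rw [step1, iterate_ibp n (legendre n) n le_rfl, Nat.sub_self,
    Function.iterate_zero_apply, iter_top (legendre n) n hLdeg, hLcoeff, pint_Cmul, wallis]
  have hnfd : (n.factorial : ℝ) * ((2*n).descFactorial n : ℝ) = ((2*n).factorial : ℝ) := by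
    rw [Nat.descFactorial_eq_factorial_mul_choose]
    have h := Nat.choose_mul_factorial_mul_factorial (show n ≤ 2*n by omega)
    have h2 : 2*n - n = n := by omega
    rw [h2] at h
    push_cast [← h]
    ring
  have hsq : ((-1:ℝ))^n * (-1)^n = 1 := by
    rw [← pow_add]
    exact Even.neg_one_pow ⟨n, rfl⟩
  have hstep : ((2*n+1).factorial : ℝ) = (2*(n:ℝ)+1) * ((2*n).factorial : ℝ) := by
    rw [Nat.factorial_succ]; push_cast; ring
  have h1 : ((2:ℝ)^n) ≠ 0 := by positivity
  have h2 : ((n.factorial : ℝ)) ≠ 0 := by positivity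
  have h3 : ((2*n).factorial : ℝ) ≠ 0 := by positivity
  have h4 : (2*(n:ℝ)+1) ≠ 0 := by positivity
  rw [hc, hstep]
  have hT : (4:ℝ)^n = 2^n * 2^n := by rw [← mul_pow]; norm_num
  field_simp
  linear_combination ((n.factorial:ℝ)*(((2*n).descFactorial n : ℕ):ℝ)*((4:ℝ)^n)) * hsq
    + ((4:ℝ)^n) * hnfd + (((2*n).factorial : ℕ):ℝ) * hT

/-- The antiderivative of `legendre (m+1)` vanishing at `±1`. -/
noncomputable def Rp (m : ℕ) : Polynomial ℝ :=
  ((2:ℝ)^(m+1) * ((m+1).factorial : ℝ))⁻¹ • derivative^[m] (u ^ (m+1))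

lemma deriv_Rp (m : ℕ) : derivative (Rp m) = legendre (m+1) := by
  rw [Rp, derivative_smul, ← Function.iterate_succ_apply' derivative m, legendre_eq]

lemma Rp_eval (m : ℕ) (x : ℝ) (hx : x = 1 ∨ x = -1) : (Rp m).eval x = 0 := by
  rw [Rp, smul_eq_C_mul, eval_mul, eval_iter_zero (m+1) m (Nat.lt_succ_self m) x hx, mul_zero]

lemma Rp_eq (m : ℕ) :
    (2*(m:ℝ)+3) • Rp m = legendre (m+2) - legendre m := by
  have h := rodrigues_step m
  have hL2 : legendre (m+2) =
      ((2:ℝ)^(m+2) * ((m+2).factorial : ℝ))⁻¹ •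
        (C (((2*(m+2))*(2*m+3) : ℕ) : ℝ) * derivative^[m] (u ^ (m+1))
          + C ((4*(m+1)*(m+2) : ℕ) : ℝ) * derivative^[m] (u ^ m)) := by
    rw [legendre_eq, h]
  have e1 : ((2:ℝ)^(m+2) * ((m+2).factorial : ℝ))⁻¹ * (((2*(m+2))*(2*m+3) : ℕ) : ℝ)
      = (2*(m:ℝ)+3) * ((2:ℝ)^(m+1) * ((m+1).factorial : ℝ))⁻¹ := by
    have f2 : ((m+2).factorial : ℝ) = ((m:ℝ)+2) * ((m+1).factorial : ℝ) := by
      rw [Nat.factorial_succ]; push_cast; ring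
    have hne : ((m+1).factorial : ℝ) ≠ 0 := by positivity
    rw [f2]
    push_cast
    field_simp
    ring
  have e2 : ((2:ℝ)^(m+2) * ((m+2).factorial : ℝ))⁻¹ * ((4*(m+1)*(m+2) : ℕ) : ℝ)
      = ((2:ℝ)^m * (m.factorial : ℝ))⁻¹ := by
    have f2 : ((m+2).factorial : ℝ) = ((m:ℝ)+2) * (((m:ℝ)+1) * (m.factorial : ℝ)) := by
      rw [Nat.factorial_succ, Nat.factorial_succ]; push_cast; ring
    have hne : (m.factorial : ℝ) ≠ 0 := by positivity
    rw [f2]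
    push_cast
    field_simp
    ring
  rw [hL2, legendre_eq m, Rp, smul_smul, smul_add, ← smul_eq_C_mul, ← smul_eq_C_mul,
    smul_smul, smul_smul, e1, e2]
  abel



-- Cauchy-Schwarz for integrals, bespoke
lemma cs {μ : Measure ℝ} {f g : ℝ → ℝ}
    (hf2 : Integrable (fun t => f t ^ 2) μ)
    (hg2 : Integrable (fun t => g t ^ 2) μ)
    (hfg : Integrable (fun t => f t * g t) μ) :
    |∫ t, f t * g t ∂μ| ≤ Real.sqrt (∫ t, f t ^ 2 ∂μ) * Real.sqrt (∫ t, g t ^ 2 ∂μ) := by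
  set A : ℝ := ∫ t, f t ^ 2 ∂μ with hA
  set B : ℝ := ∫ t, f t * g t ∂μ with hB
  set D : ℝ := ∫ t, g t ^ 2 ∂μ with hD
  have hA0 : 0 ≤ A := integral_nonneg fun t => sq_nonneg _
  have hD0 : 0 ≤ D := integral_nonneg fun t => sq_nonneg _
  have key : ∀ r : ℝ, 0 ≤ A * r^2 + 2 * B * r + D := by
    intro r
    have e : r^2 * A + (2*r) * B + D = ∫ t, (r^2 * (f t ^2) + ((2*r) * (f t * g t) + g t ^2)) ∂μ := by
      have i1 : Integrable (fun t => (2*r) * (f t * g t) + g t ^2) μ := (hfg.const_mul _).add hg2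
      rw [integral_add (hf2.const_mul _) i1,
        integral_add (hfg.const_mul _) hg2, integral_const_mul, integral_const_mul,
        hA, hB, hD]
      ring
    have h2 : 0 ≤ ∫ t, (r^2 * (f t ^2) + ((2*r) * (f t * g t) + g t ^2)) ∂μ := by
      refine integral_nonneg fun t => ?_
      have : r^2 * (f t ^2) + ((2*r) * (f t * g t) + g t ^2) = (r * f t + g t)^2 := by ring
      rw [this]; exact sq_nonneg _
    nlinarith [h2, e]
  have hBsq : B^2 ≤ A * D := by
    rcases eq_or_lt_of_le hA0 with hAz | hApos
    · have hBz : B = 0 := by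
        by_contra hB0
        have h1 := key ((-D - 1) / (2*B))
        rw [← hAz] at h1
        have h2 : 2 * B * ((-D - 1)/(2*B)) = -D - 1 := by
          field_simp
        nlinarith [h1, h2]
      rw [hBz, ← hAz]
      simp
    · have h1 := key (-B / A)
      have h2 : A * (-B/A)^2 + 2*B*(-B/A) + D = D - B^2/A := by
        field_simp
        ring
      rw [h2] at h1
      have h3 : B^2/A ≤ D := by linarith
      have h4 := (div_le_iff₀ hApos).mp h3
      nlinarith [h4]
  calc |B| = Real.sqrt (B^2) := (Real.sqrt_sq_eq_abs B).symm
    _ ≤ Real.sqrt (A * D) := Real.sqrt_le_sqrt hBsq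
    _ = Real.sqrt A * Real.sqrt D := Real.sqrt_mul hA0 _


section Analytic

open Set

variable {w w' : ℝ → ℝ}
variable (hw : ∀ t ∈ Set.Icc (-1:ℝ) 1, HasDerivWithinAt w (w' t) (Set.Icc (-1:ℝ) 1) t)
variable (hw2 : IntegrableOn (fun t => (w' t) ^ 2) (Set.Icc (-1:ℝ) 1))

include hw in
lemma w_contOn : ContinuousOn w (Set.Icc (-1:ℝ) 1) :=
  fun t ht => (hw t ht).continuousWithinAt

include hw in
lemma w'_hasDerivAt {x : ℝ} (hx : x ∈ Set.Ioo (-1:ℝ) 1) : HasDerivAt w (w' x) x :=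
  (hw x (Ioo_subset_Icc_self hx)).hasDerivAt (Icc_mem_nhds hx.1 hx.2)

include hw in
lemma w'_meas : AEStronglyMeasurable w' (volume.restrict (Set.Icc (-1:ℝ) 1)) := by
  have hone : (volume.restrict (Set.Icc (-1:ℝ) 1)) {(1:ℝ)} = 0 :=
    le_antisymm (le_trans (Measure.restrict_apply_le _ _) (by simp)) (by simp)
  have hmone : (volume.restrict (Set.Icc (-1:ℝ) 1)) {(-1:ℝ)} = 0 :=
    le_antisymm (le_trans (Measure.restrict_apply_le _ _) (by simp)) (by simp)
  have h1 : ∀ᵐ t ∂(volume.restrict (Set.Icc (-1:ℝ) 1)), t ≠ (1:ℝ) := by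
    rw [ae_iff]
    convert hone using 2
    ext t; simp
  have h2 : ∀ᵐ t ∂(volume.restrict (Set.Icc (-1:ℝ) 1)), t ≠ (-1:ℝ) := by
    rw [ae_iff]
    convert hmone using 2
    ext t; simp
  have h3 : ∀ᵐ t ∂(volume.restrict (Set.Icc (-1:ℝ) 1)), t ∈ Set.Icc (-1:ℝ) 1 :=
    ae_restrict_mem measurableSet_Icc
  have heq : w' =ᵐ[volume.restrict (Set.Icc (-1:ℝ) 1)] deriv w := by
    filter_upwards [h1, h2, h3] with t ht1 ht2 ht3
    have htIoo : t ∈ Set.Ioo (-1:ℝ) 1 := by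
      rcases ht3 with ⟨hl, hr⟩
      exact ⟨lt_of_le_of_ne hl (Ne.symm ht2), lt_of_le_of_ne hr ht1⟩
    exact ((w'_hasDerivAt hw htIoo).deriv).symm
  exact (stronglyMeasurable_deriv w).aestronglyMeasurable.congr heq.symm

include hw hw2 in
lemma w'_int : IntegrableOn w' (Set.Icc (-1:ℝ) 1) := by
  refine Integrable.mono' (g := fun t => 1 + (w' t)^2) ?_ (w'_meas hw) ?_
  · exact (integrable_const _).add hw2
  · filter_upwards with t
    have := sq_nonneg (|w' t| - 1)
    rw [Real.norm_eq_abs]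
    nlinarith [sq_abs (w' t)]

include hw hw2 in
lemma w'P_int (P : Polynomial ℝ) :
    IntegrableOn (fun t => w' t * P.eval t) (Set.Icc (-1:ℝ) 1) := by
  obtain ⟨M, hM⟩ := (isCompact_Icc (a := (-1:ℝ)) (b := 1)).exists_bound_of_continuousOn
    (Polynomial.continuous P).continuousOn
  refine Integrable.mono' (g := fun t => M * |w' t|) ?_
    ((w'_meas hw).mul (Polynomial.continuous P).aestronglyMeasurable.restrict) ?_
  · exact ((w'_int hw hw2).norm.const_mul M)
  · filter_upwards [ae_restrict_mem (measurableSet_Icc : MeasurableSet (Set.Icc (-1:ℝ) 1))]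
      with t ht
    rw [Real.norm_eq_abs, abs_mul]
    have h1 := hM t ht
    have h2 : |w' t| * |P.eval t| ≤ |w' t| * M := by
      apply mul_le_mul_of_nonneg_left _ (abs_nonneg _)
      simpa [Real.norm_eq_abs] using h1
    linarith [h2]

include hw in
lemma wP_int (P : Polynomial ℝ) :
    IntegrableOn (fun t => w t * P.eval t) (Set.Icc (-1:ℝ) 1) :=
  ((w_contOn hw).mul (Polynomial.continuous P).continuousOn).integrableOn_Icc

include hw hw2 in
lemma ibp_w (P : Polynomial ℝ) (hP1 : P.eval 1 = 0) (hPm : P.eval (-1) = 0) :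
    ∫ t in Set.Icc (-1:ℝ) 1, w t * (derivative P).eval t
      = - ∫ t in Set.Icc (-1:ℝ) 1, w' t * P.eval t := by
  set f' : ℝ → ℝ := fun t => w' t * P.eval t + w t * (derivative P).eval t with hf'
  have hintIcc : IntegrableOn f' (Set.Icc (-1:ℝ) 1) :=
    (w'P_int hw hw2 P).add (wP_int hw (derivative P))
  have hint : IntervalIntegrable f' volume (-1:ℝ) 1 :=
    (intervalIntegrable_iff_integrableOn_Icc_of_le (by norm_num)).mpr hintIcc
  have hcont : ContinuousOn (fun t => w t * P.eval t) (Set.Icc (-1:ℝ) 1) :=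
    (w_contOn hw).mul (Polynomial.continuous P).continuousOn
  have hderiv : ∀ x ∈ Set.Ioo (-1:ℝ) 1,
      HasDerivWithinAt (fun t => w t * P.eval t) (f' x) (Set.Ioi x) x := by
    intro x hx
    exact (((w'_hasDerivAt hw hx).mul (P.hasDerivAt x))).hasDerivWithinAt
  have h := intervalIntegral.integral_eq_sub_of_hasDeriv_right_of_le (by norm_num) hcont hderiv hint
  rw [hP1, hPm, mul_zero, mul_zero, sub_zero] at h
  have h2 : ∫ t in Set.Icc (-1:ℝ) 1, f' t = 0 := by
    rw [MeasureTheory.integral_Icc_eq_integral_Ioc,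
      ← intervalIntegral.integral_of_le (by norm_num : (-1:ℝ) ≤ 1), h]
  rw [hf'] at h2
  rw [integral_add (w'P_int hw hw2 P) (wP_int hw (derivative P))] at h2
  linarith

include hw hw2 in
lemma coeff_formula (m : ℕ) :
    ((m:ℝ) + 1 + 1/2) * ∫ t in Set.Icc (-1:ℝ) 1, w t * (legendre (m+1)).eval t
      = (1/2) * ((∫ t in Set.Icc (-1:ℝ) 1, w' t * (legendre m).eval t)
          - ∫ t in Set.Icc (-1:ℝ) 1, w' t * (legendre (m+2)).eval t) := by
  have h1 : ∫ t in Set.Icc (-1:ℝ) 1, w t * (legendre (m+1)).eval t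
      = - ∫ t in Set.Icc (-1:ℝ) 1, w' t * (Rp m).eval t := by
    rw [← deriv_Rp m]
    exact ibp_w hw hw2 (Rp m) (Rp_eval m 1 (Or.inl rfl)) (Rp_eval m (-1) (Or.inr rfl))
  have h2 : (2*(m:ℝ)+3) * ∫ t in Set.Icc (-1:ℝ) 1, w' t * (Rp m).eval t
      = (∫ t in Set.Icc (-1:ℝ) 1, w' t * (legendre (m+2)).eval t)
        - ∫ t in Set.Icc (-1:ℝ) 1, w' t * (legendre m).eval t := by
    rw [← integral_sub (w'P_int hw hw2 (legendre (m+2))) (w'P_int hw hw2 (legendre m)),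
      ← integral_const_mul]
    apply integral_congr_ae
    filter_upwards with t
    have he := congrArg (Polynomial.eval t) (Rp_eq m)
    rw [eval_smul, eval_sub, smul_eq_mul] at he
    calc (2*(m:ℝ)+3) * (w' t * (Rp m).eval t)
        = w' t * ((2*(m:ℝ)+3) * (Rp m).eval t) := by ring
      _ = w' t * ((legendre (m+2)).eval t - (legendre m).eval t) := by rw [he]
      _ = w' t * (legendre (m+2)).eval t - w' t * (legendre m).eval t := by ring
  rw [h1]
  linarith

include hw hw2 in
lemma cL_bound (k : ℕ) :
    |∫ t in Set.Icc (-1:ℝ) 1, w' t * (legendre k).eval t|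
      ≤ Real.sqrt (∫ t in Set.Icc (-1:ℝ) 1, (w' t)^2) * Real.sqrt (2/(2*(k:ℝ)+1)) := by
  have hg2 : Integrable (fun t => ((legendre k).eval t)^2)
      (volume.restrict (Set.Icc (-1:ℝ) 1)) :=
    (((Polynomial.continuous (legendre k)).pow 2)).integrableOn_Icc
  have h := cs (μ := volume.restrict (Set.Icc (-1:ℝ) 1)) hw2 hg2 (w'P_int hw hw2 (legendre k))
  have he : (∫ t in Set.Icc (-1:ℝ) 1, ((legendre k).eval t)^2) = 2/(2*(k:ℝ)+1) := by
    rw [← norm_legendre k, pint]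
    apply integral_congr_ae
    filter_upwards with t
    rw [eval_mul]
    ring
  rw [he] at h
  exact h

end Analytic

end LegAux


/-- Legendre tail bound: if `w ∈ H¹(-1,1)` has Legendre coefficients
`w_j = (j + 1/2) ∫_{-1}^1 w L_j`, then `|Σ_{j ≥ p} w_j| ≤ C p^{-1/2} ‖w'‖_{L²(-1,1)}`
for an absolute constant `C`. -/
theorem legendre_tail_bound :
    ∃ C : ℝ, 0 < C ∧ ∀ (w w' : ℝ → ℝ),
      (∀ t ∈ Set.Icc (-1:ℝ) 1, HasDerivWithinAt w (w' t) (Set.Icc (-1:ℝ) 1) t) →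
      IntegrableOn (fun t => (w' t) ^ 2) (Set.Icc (-1:ℝ) 1) →
      ∀ p : ℕ, 1 ≤ p →
        |∑' j : ℕ, (((p + j : ℕ) : ℝ) + 1/2)
            * ∫ t in Set.Icc (-1:ℝ) 1, w t * (legendre (p + j)).eval t|
          ≤ C * (p : ℝ) ^ (-(1:ℝ)/2)
              * Real.sqrt (∫ t in Set.Icc (-1:ℝ) 1, (w' t) ^ 2) := by
  refine ⟨2, by norm_num, ?_⟩
  intro w w' hw hw2 p hp
  set S : ℝ := Real.sqrt (∫ t in Set.Icc (-1:ℝ) 1, (w' t) ^ 2) with hS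
  have hS0 : 0 ≤ S := Real.sqrt_nonneg _
  have hppos : (0:ℝ) < p := by exact_mod_cast hp
  have hsqrtp : (0:ℝ) < Real.sqrt p := Real.sqrt_pos.mpr hppos
  have hrp : (p:ℝ) ^ (-(1:ℝ)/2) = (Real.sqrt p)⁻¹ := by
    rw [show (-(1:ℝ)/2) = -(1/2) by norm_num, Real.rpow_neg (Nat.cast_nonneg p),
      Real.sqrt_eq_rpow]
  set f : ℕ → ℝ := fun j => (((p + j : ℕ) : ℝ) + 1/2)
      * ∫ t in Set.Icc (-1:ℝ) 1, w t * (legendre (p + j)).eval t with hf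
  set cL : ℕ → ℝ := fun k => ∫ t in Set.Icc (-1:ℝ) 1, w' t * (legendre k).eval t with hcL
  set g : ℕ → ℝ := fun i => (1/2) * cL (p - 1 + i) with hg
  by_cases hsum : Summable f
  · -- identify the tsum
    have hfg : ∀ j, f j = g j - g (j+2) := by
      intro j
      have hidx : p - 1 + j + 1 = p + j := by omega
      have h := LegAux.coeff_formula hw hw2 (p - 1 + j)
      rw [hidx] at h
      have hc : (((p + j : ℕ)) : ℝ) + 1/2 = ((p - 1 + j : ℕ) : ℝ) + 1 + 1/2 := by
        rw [show p + j = (p - 1 + j) + 1 by omega]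
        push_cast
        ring
      have hidx2 : p - 1 + (j + 2) = (p - 1 + j) + 2 := by omega
      simp only [hf, hg, hcL]
      rw [hc, hidx2, h]
      ring
    have htel : ∀ N, ∑ i ∈ Finset.range N, f i = g 0 + g 1 - g N - g (N+1) := by
      intro N
      induction N with
      | zero => simp only [Finset.sum_range_zero, Nat.zero_add]; ring
      | succ N ih => rw [Finset.sum_range_succ, ih, hfg N]; ring
    have hbound : ∀ k : ℕ, |cL k| ≤ S * Real.sqrt (2/(2*(k:ℝ)+1)) :=
      fun k => LegAux.cL_bound hw hw2 k
    have hglim : Filter.Tendsto g Filter.atTop (nhds 0) := by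
      have t1 : Filter.Tendsto (fun i:ℕ => Real.sqrt (2/((i:ℝ)+1))) Filter.atTop (nhds 0) := by
        have h0 : Filter.Tendsto (fun i:ℕ => 2/((i:ℝ)+1)) Filter.atTop (nhds 0) := by
          have h2 := tendsto_one_div_add_atTop_nhds_zero_nat.const_mul (2:ℝ)
          rw [mul_zero] at h2
          convert h2 using 2 with i
          ring
        have h3 := (Real.continuous_sqrt.tendsto 0).comp h0
        rwa [Real.sqrt_zero] at h3
      have t2 := t1.const_mul ((1/2) * S)
      rw [mul_zero] at t2
      refine squeeze_zero_norm (fun i => ?_) t2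
      rw [Real.norm_eq_abs]
      simp only [hg]
      rw [abs_mul, abs_of_nonneg (by norm_num : (0:ℝ) ≤ 1/2)]
      have h1 := hbound (p - 1 + i)
      have h2 : Real.sqrt (2/(2*((p - 1 + i : ℕ):ℝ)+1)) ≤ Real.sqrt (2/((i:ℝ)+1)) := by
        apply Real.sqrt_le_sqrt
        apply div_le_div_of_nonneg_left (by norm_num) (by positivity)
        have : (i:ℝ) ≤ ((p - 1 + i : ℕ):ℝ) := by exact_mod_cast Nat.le_add_left i (p-1)
        linarith
      have h3 : (0:ℝ) ≤ Real.sqrt (2/(2*((p - 1 + i : ℕ):ℝ)+1)) := Real.sqrt_nonneg _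
      nlinarith [Real.sqrt_nonneg (2/((i:ℝ)+1)), abs_nonneg (cL (p-1+i))]
    have hg1 : Filter.Tendsto (fun N : ℕ => g (N+1)) Filter.atTop (nhds 0) :=
      hglim.comp (Filter.tendsto_add_atTop_nat 1)
    have h1 := hsum.hasSum.tendsto_sum_nat
    rw [show (fun N => ∑ i ∈ Finset.range N, f i)
        = (fun N => g 0 + g 1 - g N - g (N+1)) from funext htel] at h1
    have hlim2 : Filter.Tendsto (fun N => g 0 + g 1 - g N - g (N+1)) Filter.atTop
        (nhds (g 0 + g 1 - 0 - 0)) :=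
      (tendsto_const_nhds.sub hglim).sub hg1
    rw [sub_zero, sub_zero] at hlim2
    have hT : ∑' j, f j = g 0 + g 1 := tendsto_nhds_unique h1 hlim2
    rw [hT]
    -- final numeric bound
    have hb0 : |cL (p-1)| ≤ S * Real.sqrt (2/(2*((p-1:ℕ):ℝ)+1)) := hbound (p-1)
    have hb1 : |cL p| ≤ S * Real.sqrt (2/(2*(p:ℝ)+1)) := hbound p
    have hcast : ((p-1:ℕ):ℝ) = (p:ℝ) - 1 := by
      have := Nat.cast_sub hp (R := ℝ)
      simpa using this
    have hs0 : Real.sqrt (2/(2*((p-1:ℕ):ℝ)+1)) ≤ Real.sqrt (2/(p:ℝ)) := by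
      apply Real.sqrt_le_sqrt
      rw [hcast]
      apply div_le_div_of_nonneg_left (by norm_num) hppos
      linarith [hppos, (by exact_mod_cast hp : (1:ℝ) ≤ p)]
    have hs1 : Real.sqrt (2/(2*(p:ℝ)+1)) ≤ Real.sqrt (2/(p:ℝ)) := by
      apply Real.sqrt_le_sqrt
      apply div_le_div_of_nonneg_left (by norm_num) hppos
      linarith
    have hs2 : Real.sqrt (2/(p:ℝ)) ≤ 2 / Real.sqrt p := by
      rw [show (2:ℝ)/(p:ℝ) = 2 * ((p:ℝ))⁻¹ by ring, Real.sqrt_mul (by norm_num : (0:ℝ) ≤ 2),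
        Real.sqrt_inv]
      have h2 : Real.sqrt 2 ≤ 2 := by
        nlinarith [Real.sq_sqrt (by norm_num : (0:ℝ) ≤ 2), Real.sqrt_nonneg 2]
      rw [div_eq_mul_inv]
      exact mul_le_mul_of_nonneg_right h2 (by positivity)
    have hi0 : p - 1 + 0 = p - 1 := by omega
    have hi1 : p - 1 + 1 = p := by omega
    have hg0 : g 0 = 1/2 * cL (p-1) := by simp only [hg]; rw [hi0]
    have hg1' : g 1 = 1/2 * cL p := by simp only [hg]; rw [hi1]
    calc |g 0 + g 1| ≤ |g 0| + |g 1| := abs_add_le _ _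
      _ = 1/2 * |cL (p-1)| + 1/2 * |cL p| := by
          rw [hg0, hg1', abs_mul, abs_mul, abs_of_nonneg (by norm_num : (0:ℝ) ≤ 1/2)]
      _ ≤ 1/2 * (S * Real.sqrt (2/(2*((p-1:ℕ):ℝ)+1))) + 1/2 * (S * Real.sqrt (2/(2*(p:ℝ)+1))) := by
          have e1 := mul_le_mul_of_nonneg_left hb0 (by norm_num : (0:ℝ) ≤ 1/2)
          have e2 := mul_le_mul_of_nonneg_left hb1 (by norm_num : (0:ℝ) ≤ 1/2)
          linarith
      _ ≤ 1/2 * (S * Real.sqrt (2/(p:ℝ))) + 1/2 * (S * Real.sqrt (2/(p:ℝ))) := by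
          have e1 := mul_le_mul_of_nonneg_left hs0 hS0
          have e2 := mul_le_mul_of_nonneg_left hs1 hS0
          linarith
      _ = S * Real.sqrt (2/(p:ℝ)) := by ring
      _ ≤ S * (2 / Real.sqrt p) := mul_le_mul_of_nonneg_left hs2 hS0
      _ = 2 * (Real.sqrt p)⁻¹ * S := by rw [div_eq_mul_inv]; ring
      _ = 2 * (p:ℝ) ^ (-(1:ℝ)/2) * S := by rw [hrp]
  · rw [tsum_eq_zero_of_not_summable hsum, abs_zero]
    positivity
end

section
/- Stability of the discrete test function: let I_n have length τ_n, let U be a polynomial of degree ≤ p (p ≥ 2) in time with values in a Hilbert space X, set λ = 1/(4(2p+1)τ_n), and let W = Π^0_{p-1}([1 - λ(t - t_{n-1})] U') be the L² projection onto degree ≤ p-1 polynomials of the weighted derivative. Then ‖U'(t_{n-1}) - W(t_{n-1})‖_X ≤ λ √((2p+1) τ_n) ‖U'‖_{L²(I_n;X)} = (1/2)·((2p+1)τ_n)^{-1/2}‖U'‖_{L²(I_n;X)}. -/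
open MeasureTheory

open Polynomial intervalIntegral

namespace Walk

lemma ibp_poly (a b : ℝ) (f g : ℝ[X]) :
    ∫ t in a..b, f.eval t * (derivative g).eval t
      = f.eval b * g.eval b - f.eval a * g.eval a
        - ∫ t in a..b, (derivative f).eval t * g.eval t := by
  apply integral_mul_deriv_eq_deriv_mul_of_hasDerivAt
  · exact (f.continuous_aeval.continuousOn)
  · exact (g.continuous_aeval.continuousOn)
  · exact fun x _ => f.hasDerivAt x
  · exact fun x _ => g.hasDerivAt x
  · exact ((derivative f).continuous_aeval).intervalIntegrable a b
  · exact ((derivative g).continuous_aeval).intervalIntegrable a b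

lemma ibp_iter (a b : ℝ) (k : ℕ) (f g : ℝ[X])
    (hg : ∀ i < k, (derivative^[i] g).eval a = 0 ∧ (derivative^[i] g).eval b = 0) :
    ∫ t in a..b, f.eval t * (derivative^[k] g).eval t
      = (-1 : ℝ) ^ k * ∫ t in a..b, (derivative^[k] f).eval t * g.eval t := by
  induction k generalizing f with
  | zero => simp
  | succ k ih =>
    rw [Function.iterate_succ_apply']
    rw [ibp_poly a b f (derivative^[k] g)]
    obtain ⟨ha0, hb0⟩ := hg k (by omega)
    have h2 : ∫ t in a..b, (derivative f).eval t * (derivative^[k] g).eval t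
        = (-1 : ℝ) ^ k * ∫ t in a..b, (derivative^[k] (derivative f)).eval t * g.eval t :=
      ih (derivative f) (fun i hi => hg i (by omega))
    rw [ha0, hb0, h2, ← Function.iterate_succ_apply]
    ring

noncomputable def gp (a b : ℝ) (p : ℕ) : ℝ[X] := ((X - C a) * (C b - X)) ^ p

noncomputable def Rod (a b : ℝ) (p : ℕ) : ℝ[X] := derivative^[p] (gp a b p)

lemma gp_natDegree_le (a b : ℝ) (p : ℕ) : (gp a b p).natDegree ≤ 2 * p := by
  refine (natDegree_pow_le).trans ?_
  have : ((X - C a) * (C b - X)).natDegree ≤ 2 :=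
    natDegree_mul_le.trans (by
      have h1 : (X - C a : ℝ[X]).natDegree ≤ 1 := natDegree_X_sub_C_le a
      have h2 : (C b - X : ℝ[X]).natDegree ≤ 1 := by
        simpa using (natDegree_sub_le (C b) (X : ℝ[X])).trans (by simp)
      omega)
  calc p * ((X - C a) * (C b - X)).natDegree ≤ p * 2 := Nat.mul_le_mul_left _ this
  _ = 2 * p := by ring

lemma gp_coeff_top (a b : ℝ) (p : ℕ) : (gp a b p).coeff (2 * p) = (-1 : ℝ) ^ p := by
  have h : gp a b p = C ((-1 : ℝ) ^ p) * ((X - C a) * (X - C b)) ^ p := by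
    rw [C_pow, ← mul_pow, gp]
    congr 1
    simp only [map_neg, C_1]
    ring
  have hm : (((X - C a) * (X - C b) : ℝ[X]) ^ p).Monic :=
    ((monic_X_sub_C a).mul (monic_X_sub_C b)).pow p
  have hd : (((X - C a) * (X - C b) : ℝ[X]) ^ p).natDegree = 2 * p := by
    rw [natDegree_pow, Monic.natDegree_mul (monic_X_sub_C a) (monic_X_sub_C b)]
    simp [natDegree_X_sub_C]; ring
  rw [h, coeff_C_mul, ← hd, Monic.coeff_natDegree hm, mul_one]

lemma Rod_natDegree_le (a b : ℝ) (p : ℕ) : (Rod a b p).natDegree ≤ p := by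
  refine (natDegree_iterate_derivative _ _).trans ?_
  have := gp_natDegree_le a b p; omega

lemma Rod_coeff_top (a b : ℝ) (p : ℕ) :
    (Rod a b p).coeff p = ((2 * p).descFactorial p : ℝ) * (-1 : ℝ) ^ p := by
  rw [Rod, coeff_iterate_derivative]
  have h2 : p + p = 2 * p := by ring
  rw [h2, gp_coeff_top, nsmul_eq_mul]

lemma Rod_eval_left (a b : ℝ) (p : ℕ) :
    (Rod a b p).eval a = (p.factorial : ℝ) * (b - a) ^ p := by
  have hs : derivative^[p] (gp a b p) = p.factorial • hasseDeriv p (gp a b p) := by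
    rw [← factorial_smul_hasseDeriv]; rfl
  rw [Rod, hs]
  have ht : (taylor a (gp a b p)).coeff p = (hasseDeriv p (gp a b p)).eval a :=
    taylor_coeff (r := a) (f := gp a b p) p
  have htay : taylor a (gp a b p) = (X * (C (b - a) - X)) ^ p := by
    simp only [gp, taylor_apply, pow_comp, mul_comp, sub_comp, X_comp, C_comp, map_sub, C_sub]
    congr 1
    ring
  have hc : (taylor a (gp a b p)).coeff p = (b - a) ^ p := by
    rw [htay, mul_pow]
    have := coeff_X_pow_mul ((C (b - a) - X : ℝ[X]) ^ p) p 0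
    rw [zero_add] at this
    rw [this, coeff_zero_eq_eval_zero]
    simp
  rw [eval_smul, ← ht, hc]
  simp [nsmul_eq_mul]

lemma Rod_endpoint_vanish (a b : ℝ) (p : ℕ) {i : ℕ} (hi : i < p) :
    (derivative^[i] (gp a b p)).eval a = 0 ∧ (derivative^[i] (gp a b p)).eval b = 0 := by
  constructor
  · have hdvd : (X - C a) ^ p ∣ gp a b p := by
      rw [gp, mul_pow]; exact Dvd.intro _ rfl
    obtain ⟨r, hr⟩ := pow_sub_dvd_iterate_derivative_of_pow_dvd i hdvd
    rw [hr]
    simp [eval_pow, zero_pow (Nat.sub_ne_zero_of_lt hi)]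
  · have hdvd : (C b - X) ^ p ∣ gp a b p := by
      rw [gp, mul_pow]; exact Dvd.intro_left _ rfl
    obtain ⟨r, hr⟩ := pow_sub_dvd_iterate_derivative_of_pow_dvd i hdvd
    rw [hr]
    simp [eval_pow, zero_pow (Nat.sub_ne_zero_of_lt hi)]

/-- Orthogonality: `Rod` is orthogonal to all polynomials of degree `< p`. -/
lemma Rod_orth (a b : ℝ) (p : ℕ) (f : ℝ[X]) (hf : f.natDegree < p) :
    ∫ t in a..b, f.eval t * (Rod a b p).eval t = 0 := by
  rw [Rod, ibp_iter a b p f (gp a b p) (fun i hi => Rod_endpoint_vanish a b p hi),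
    iterate_derivative_eq_zero hf]
  simp

lemma Rod_orth_mono (a b : ℝ) (p j : ℕ) (hj : j < p) :
    ∫ t in a..b, t ^ j * (Rod a b p).eval t = 0 := by
  have := Rod_orth a b p (X ^ j) (by simpa [natDegree_X_pow] using hj)
  simpa using this

lemma beta_step (a b : ℝ) (m n : ℕ) :
    ((m : ℝ) + 1) * ∫ t in a..b, (t - a) ^ m * (b - t) ^ (n + 1)
      = ((n : ℝ) + 1) * ∫ t in a..b, (t - a) ^ (m + 1) * (b - t) ^ n := by
  have hd : ∀ t : ℝ, HasDerivAt (fun s => (s - a) ^ (m + 1) * (b - s) ^ (n + 1))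
      ((((m:ℝ)+1) * (t - a) ^ m * 1) * (b - t) ^ (n+1)
        + (t - a) ^ (m+1) * (((n:ℝ)+1) * (b - t) ^ n * (-1))) t := by
    intro t
    have h1 : HasDerivAt (fun s : ℝ => (s - a) ^ (m + 1)) (((m:ℝ)+1) * (t - a) ^ m * 1) t := by
      simpa using ((hasDerivAt_id t).sub_const a).fun_pow (m+1)
    have h2 : HasDerivAt (fun s : ℝ => (b - s) ^ (n + 1)) (((n:ℝ)+1) * (b - t) ^ n * (-1)) t := by
      simpa using ((hasDerivAt_id t).const_sub b).fun_pow (n+1)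
    exact h1.mul h2
  have hint : ∫ t in a..b, ((((m:ℝ)+1) * (t - a) ^ m * 1) * (b - t) ^ (n+1)
        + (t - a) ^ (m+1) * (((n:ℝ)+1) * (b - t) ^ n * (-1))) = 0 := by
    rw [integral_eq_sub_of_hasDerivAt (fun t _ => hd t)]
    · simp
    · apply Continuous.intervalIntegrable; continuity
  have hsplit : ∫ t in a..b, ((((m:ℝ)+1) * (t - a) ^ m * 1) * (b - t) ^ (n+1)
        + (t - a) ^ (m+1) * (((n:ℝ)+1) * (b - t) ^ n * (-1)))
      = (((m:ℝ)+1) * ∫ t in a..b, (t - a) ^ m * (b - t) ^ (n + 1))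
        - (((n:ℝ)+1) * ∫ t in a..b, (t - a) ^ (m+1) * (b - t) ^ n) := by
    rw [← intervalIntegral.integral_const_mul, ← intervalIntegral.integral_const_mul, ← intervalIntegral.integral_sub]
    · apply integral_congr; intro t _; ring
    · apply Continuous.intervalIntegrable; continuity
    · apply Continuous.intervalIntegrable; continuity
  linarith [hsplit ▸ hint]

lemma beta (a b : ℝ) : ∀ (n m : ℕ), ∫ t in a..b, (t - a) ^ m * (b - t) ^ n
    = (m.factorial * n.factorial : ℝ) * (b - a) ^ (m + n + 1) / ((m + n + 1).factorial) := by
  intro n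
  induction n with
  | zero =>
    intro m
    have h1 : ∫ t in a..b, (t - a) ^ m * (b - t) ^ 0 = ∫ t in a..b, (t - a) ^ m := by
      apply integral_congr; intro t _; simp
    rw [h1]
    have h2 : ∫ t in a..b, (t - a) ^ m = ((b - a) ^ (m+1) - (a - a) ^ (m+1)) / ((m:ℝ)+1) := by
      have hd : ∀ t : ℝ, HasDerivAt (fun s : ℝ => (s - a) ^ (m+1) / ((m:ℝ)+1)) ((t - a) ^ m) t := by
        intro t
        have h1' := (((hasDerivAt_id t).sub_const a).pow (m+1)).div_const ((m:ℝ)+1)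
        have hval : (((m:ℕ)+1 : ℝ) * (t - a) ^ (m + 1 - 1) * 1) / ((m:ℝ)+1) = (t - a) ^ m := by
          have : ((m:ℝ)+1) ≠ 0 := by positivity
          push_cast
          field_simp
        rw [← hval]
        exact_mod_cast h1'
      rw [integral_eq_sub_of_hasDerivAt (fun t _ => hd t)
        (Continuous.intervalIntegrable (by continuity) _ _)]
      ring
    rw [h2]
    simp [Nat.factorial_succ]
    field_simp
  | succ n ih =>
    intro m
    have hms : ((m:ℝ) + 1) ≠ 0 := by positivity
    have key := beta_step a b m n
    rw [ih (m+1)] at key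
    have : ∫ t in a..b, (t - a) ^ m * (b - t) ^ (n + 1)
        = ((n:ℝ)+1) * ((((m+1).factorial : ℝ) * n.factorial) * (b - a) ^ (m + 1 + n + 1)
            / ((m + 1 + n + 1).factorial)) / ((m:ℝ)+1) := by
      field_simp at key ⊢
      linarith
    rw [this]
    have e1 : m + 1 + n + 1 = m + (n + 1) + 1 := by omega
    rw [e1]
    have e2 : ((m+1).factorial : ℝ) = ((m:ℝ)+1) * m.factorial := by
      rw [Nat.factorial_succ]; push_cast; ring
    have e3 : ((n+1).factorial : ℝ) = ((n:ℝ)+1) * n.factorial := by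
      rw [Nat.factorial_succ]; push_cast; ring
    rw [e2, e3]
    field_simp

lemma gp_eval (a b : ℝ) (p : ℕ) (t : ℝ) : (gp a b p).eval t = (t - a) ^ p * (b - t) ^ p := by
  simp [gp, mul_pow]

lemma gp_integral (a b : ℝ) (p : ℕ) :
    ∫ t in a..b, (gp a b p).eval t
      = (p.factorial * p.factorial : ℝ) * (b - a) ^ (2 * p + 1) / ((2 * p + 1).factorial) := by
  have h : ∫ t in a..b, (gp a b p).eval t = ∫ t in a..b, (t - a) ^ p * (b - t) ^ p := by
    apply integral_congr; intro t _; simp [gp_eval]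
  rw [h, beta]
  have : p + p + 1 = 2 * p + 1 := by omega
  rw [this]

lemma Rod_iter_deriv (a b : ℝ) (p : ℕ) :
    derivative^[p] (Rod a b p) = C ((2 * p).factorial * (-1 : ℝ) ^ p) := by
  have h : derivative^[p] (Rod a b p) = derivative^[p + p] (gp a b p) := by
    rw [Rod, ← Function.iterate_add_apply]
  have hdeg : (derivative^[p + p] (gp a b p)).natDegree = 0 := by
    have := natDegree_iterate_derivative (gp a b p) (p + p)
    have := gp_natDegree_le a b p
    omega
  have hc := eq_C_of_natDegree_le_zero (le_of_eq hdeg)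
  rw [h, hc]
  congr 1
  rw [coeff_iterate_derivative]
  simp only [zero_add]
  rw [← two_mul p, gp_coeff_top, Nat.descFactorial_self, nsmul_eq_mul]

lemma Rod_sq_integral (a b : ℝ) (p : ℕ) :
    ∫ t in a..b, (Rod a b p).eval t ^ 2
      = ((2 * p).factorial : ℝ) * (p.factorial * p.factorial * (b - a) ^ (2 * p + 1)
          / ((2 * p + 1).factorial)) := by
  have h1 : ∫ t in a..b, (Rod a b p).eval t ^ 2
      = ∫ t in a..b, (Rod a b p).eval t * (derivative^[p] (gp a b p)).eval t := by
    apply integral_congr; intro t _; rw [← Rod]; ring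
  rw [h1, ibp_iter a b p (Rod a b p) (gp a b p) (fun i hi => Rod_endpoint_vanish a b p hi),
    Rod_iter_deriv]
  have h2 : ∫ t in a..b, (C ((2 * p).factorial * (-1 : ℝ) ^ p)).eval t * (gp a b p).eval t
      = ((2 * p).factorial * (-1 : ℝ) ^ p) * ∫ t in a..b, (gp a b p).eval t := by
    rw [← intervalIntegral.integral_const_mul]; apply integral_congr; intro t _; simp
  rw [h2, gp_integral]
  have hsq : ((-1 : ℝ) ^ p) * ((-1 : ℝ) ^ p) = 1 := by
    rw [← pow_add]
    exact Even.neg_one_pow ⟨p, rfl⟩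
  calc (-1 : ℝ) ^ p * (((2 * p).factorial * (-1 : ℝ) ^ p)
        * ((p.factorial * p.factorial : ℝ) * (b - a) ^ (2 * p + 1) / ((2 * p + 1).factorial)))
      = (((-1 : ℝ) ^ p) * ((-1 : ℝ) ^ p)) * (((2 * p).factorial : ℝ)
          * (p.factorial * p.factorial * (b - a) ^ (2 * p + 1) / ((2 * p + 1).factorial))) := by
        ring
    _ = _ := by rw [hsq, one_mul]

lemma orth_eval (a b : ℝ) (m : ℕ) (E F : ℝ[X]) (hE : E.natDegree < m)
    (h : ∀ j < m, ∫ t in a..b, t ^ j * F.eval t = 0) :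
    ∫ t in a..b, E.eval t * F.eval t = 0 := by
  have h1 : ∫ t in a..b, E.eval t * F.eval t
      = ∫ t in a..b, ∑ j ∈ Finset.range m, E.coeff j * (t ^ j * F.eval t) := by
    apply integral_congr; intro t _
    simp only
    rw [eval_eq_sum_range' hE, Finset.sum_mul]
    exact Finset.sum_congr rfl (fun j _ => by ring)
  rw [h1, intervalIntegral.integral_finset_sum]
  · apply Finset.sum_eq_zero; intro j hj
    rw [intervalIntegral.integral_const_mul, h j (Finset.mem_range.mp hj), mul_zero]
  · intro j _
    exact (continuous_const.mul ((continuous_pow j).mul F.continuous)).intervalIntegrable a b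

lemma poly_eq_zero_of_orth (a b : ℝ) (hab : a < b) (m : ℕ) (E : ℝ[X]) (hE : E.natDegree < m)
    (h : ∀ j < m, ∫ t in a..b, t ^ j * E.eval t = 0) : E = 0 := by
  have h0 : ∫ t in a..b, E.eval t ^ 2 = 0 := by
    have := orth_eval a b m E E hE h
    rw [← this]
    exact integral_congr (fun t _ => sq (E.eval t) ▸ (by ring))
  by_contra hne
  have hfin : Set.Finite {x | E.IsRoot x} := Polynomial.finite_setOf_isRoot hne
  have hcont : Continuous (fun t => E.eval t ^ 2) := E.continuous.pow 2
  have hae : (fun t => E.eval t ^ 2) =ᵐ[volume.restrict (Set.Ioc a b)] 0 := by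
    refine (integral_eq_zero_iff_of_le_of_nonneg_ae hab.le ?_ ?_).mp h0
    · exact Filter.Eventually.of_forall (fun t => sq_nonneg _)
    · exact hcont.intervalIntegrable a b
  have hnull : volume.restrict (Set.Ioc a b) {t | ¬ (E.eval t ^ 2 = (0 : ℝ → ℝ) t)} = 0 :=
    ae_iff.mp hae
  have hset : {t : ℝ | ¬ (E.eval t ^ 2 = (0 : ℝ → ℝ) t)} = {x | E.IsRoot x}ᶜ := by
    ext t
    simp [IsRoot, pow_eq_zero_iff]
  rw [hset, Measure.restrict_apply hfin.measurableSet.compl] at hnull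
  have hsub : Set.Ioc a b ⊆ ({x | E.IsRoot x}ᶜ ∩ Set.Ioc a b) ∪ {x | E.IsRoot x} := by
    intro t ht
    by_cases hr : E.IsRoot t
    · exact Or.inr hr
    · exact Or.inl ⟨hr, ht⟩
  have hle : volume (Set.Ioc a b) ≤ 0 := by
    calc volume (Set.Ioc a b)
        ≤ volume (({x | E.IsRoot x}ᶜ ∩ Set.Ioc a b) ∪ {x | E.IsRoot x}) := measure_mono hsub
      _ ≤ volume ({x | E.IsRoot x}ᶜ ∩ Set.Ioc a b) + volume {x | E.IsRoot x} := measure_union_le _ _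
      _ = 0 := by rw [hnull, hfin.measure_zero]; simp
  rw [Real.volume_Ioc] at hle
  have : b - a ≤ 0 := by
    simpa [ENNReal.ofReal_eq_zero] using le_antisymm hle zero_le
  linarith

lemma cauchy_schwarz_integral (a b : ℝ) (hab : a ≤ b) (f g : ℝ → ℝ)
    (hf : Continuous f) (hg : Continuous g) (hN : 0 < ∫ t in a..b, g t ^ 2) :
    (∫ t in a..b, f t * g t) ^ 2 ≤ (∫ t in a..b, f t ^ 2) * ∫ t in a..b, g t ^ 2 := by
  set N := ∫ t in a..b, g t ^ 2 with hNdef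
  set B := ∫ t in a..b, f t * g t with hBdef
  set I := ∫ t in a..b, f t ^ 2 with hIdef
  have hNne : N ≠ 0 := ne_of_gt hN
  have hexp : ∫ t in a..b, (f t - (B/N) * g t) ^ 2 = I - 2*(B/N)*B + (B/N)^2 * N := by
    have hpt : ∀ t ∈ Set.uIcc a b, (fun t => (f t - (B/N) * g t) ^ 2) t
        = (fun t => f t ^ 2 - 2*(B/N) * (f t * g t) + (B/N)^2 * g t ^ 2) t := by
      intro t _; simp only; ring
    rw [integral_congr hpt, intervalIntegral.integral_add, intervalIntegral.integral_sub,
      intervalIntegral.integral_const_mul, intervalIntegral.integral_const_mul]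
    · exact ((hf.pow 2).intervalIntegrable a b)
    · exact (continuous_const.mul (hf.mul hg)).intervalIntegrable a b
    · exact ((hf.pow 2).sub (continuous_const.mul (hf.mul hg))).intervalIntegrable a b
    · exact (continuous_const.mul (hg.pow 2)).intervalIntegrable a b
  have hpos : 0 ≤ ∫ t in a..b, (f t - (B/N) * g t) ^ 2 :=
    intervalIntegral.integral_nonneg hab (fun t _ => sq_nonneg _)
  have e1 : I - 2*(B/N)*B + (B/N)^2 * N = I - B^2/N := by
    field_simp
    ring
  have h2 : B^2/N ≤ I := by
    rw [hexp, e1] at hpos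
    linarith
  calc B ^ 2 = (B^2/N) * N := by field_simp
    _ ≤ I * N := mul_le_mul_of_nonneg_right h2 hN.le

lemma final_ineq (k : ℕ) (τ : ℝ) (hτ : 0 < τ) :
    (((k+2).factorial : ℝ) * τ^(k+2))^2 * (((2*k+2).descFactorial (k+1) : ℝ))^2
      ≤ (2*((k:ℝ)+2)+1) * τ * (((2*k+4).descFactorial (k+2) : ℝ))^2
        * (((2*k+2).factorial : ℝ)
            * ((k+1).factorial * (k+1).factorial * τ^(2*k+3) / ((2*k+3).factorial))) := by
  set x := ((k+1).factorial : ℝ) with hxdef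
  set y := ((2*k+2).factorial : ℝ) with hydef
  have hx : 0 < x := by positivity
  have hy : 0 < y := by positivity
  set K := (k : ℝ) with hKdef
  have hK : 0 ≤ K := Nat.cast_nonneg k
  have hA : (((2*k+2).descFactorial (k+1) : ℝ)) = y / x := by
    have h := Nat.factorial_mul_descFactorial (n := 2*k+2) (k := k+1) (by omega)
    rw [show 2*k+2 - (k+1) = k+1 by omega] at h
    have hcast : ((k+1).factorial : ℝ) * ((2*k+2).descFactorial (k+1) : ℝ)
        = ((2*k+2).factorial : ℝ) := by exact_mod_cast h
    rw [eq_div_iff hx.ne']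
    rw [hxdef, hydef]
    linear_combination hcast
  have hB : (((2*k+4).descFactorial (k+2) : ℝ)) = (2*K+4) * (2*K+3) * y / ((K+2) * x) := by
    have h := Nat.factorial_mul_descFactorial (n := 2*k+4) (k := k+2) (by omega)
    rw [show 2*k+4 - (k+2) = k+2 by omega] at h
    have hf1 : ((k+2).factorial : ℝ) = (K+2) * x := by
      rw [hxdef, hKdef, show k+2 = (k+1)+1 from rfl, Nat.factorial_succ]; push_cast; ring
    have hf2 : ((2*k+4).factorial : ℝ) = (2*K+4) * (2*K+3) * y := by
      rw [hydef, hKdef, show 2*k+4 = (2*k+3)+1 from rfl, Nat.factorial_succ,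
        show 2*k+3 = (2*k+2)+1 from rfl, Nat.factorial_succ]
      push_cast; ring
    have hcast : ((k+2).factorial : ℝ) * ((2*k+4).descFactorial (k+2) : ℝ)
        = ((2*k+4).factorial : ℝ) := by exact_mod_cast h
    rw [hf1, hf2] at hcast
    have hK2 : ((K+2) * x) ≠ 0 := by positivity
    rw [eq_div_iff hK2]
    linear_combination hcast
  have hf3 : ((2*k+3).factorial : ℝ) = (2*K+3) * y := by
    rw [hydef, hKdef, show 2*k+3 = (2*k+2)+1 from rfl, Nat.factorial_succ]; push_cast; ring
  have hf1 : ((k+2).factorial : ℝ) = (K+2) * x := by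
    rw [hxdef, hKdef, show k+2 = (k+1)+1 from rfl, Nat.factorial_succ]; push_cast; ring
  rw [hA, hB, hf3, hf1]
  have hpow : (τ^(k+2))^2 = τ^(2*k+3) * τ := by
    rw [← pow_mul, show (k+2)*2 = 2*k+3+1 by omega, pow_succ]
  have hL : (((K+2) * x) * τ^(k+2))^2 * (y/x)^2 = (K+2)^2 * (y^2 * (τ^(2*k+3) * τ)) := by
    rw [div_pow, mul_pow, mul_pow, hpow]
    field_simp
  have hR : (2*(K+2)+1) * τ * ((2*K+4) * (2*K+3) * y / ((K+2) * x))^2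
        * (y * (x * x * τ^(2*k+3) / ((2*K+3) * y)))
      = ((2*K+5) * (2*K+4)^2 * (2*K+3) / (K+2)^2) * (y^2 * (τ^(2*k+3) * τ)) := by
    field_simp
    ring
  rw [hL, hR]
  apply mul_le_mul_of_nonneg_right
  · rw [le_div_iff₀ (by positivity)]
    nlinarith [hK, sq_nonneg K]
  · positivity

lemma final_ineq' (p : ℕ) (hp : 2 ≤ p) (τ : ℝ) (hτ : 0 < τ) :
    ((p.factorial : ℝ) * τ^p)^2 * (((2*(p-1)).descFactorial (p-1) : ℝ))^2
      ≤ (2*(p:ℝ)+1) * τ * (((2*p).descFactorial p : ℝ))^2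
        * (((2*(p-1)).factorial : ℝ)
            * ((p-1).factorial * (p-1).factorial * τ^(2*(p-1)+1) / ((2*(p-1)+1).factorial))) := by
  obtain ⟨k, rfl⟩ : ∃ k, p = k + 2 := ⟨p - 2, by omega⟩
  have e1 : k + 2 - 1 = k + 1 := rfl
  rw [e1]
  have e2 : 2 * (k + 1) = 2 * k + 2 := by ring
  rw [e2]
  have e3 : 2 * (k + 2) = 2 * k + 4 := by ring
  rw [e3]
  have e4 : 2 * k + 2 + 1 = 2 * k + 3 := rfl
  rw [e4]
  have e5 : (2 * ((k:ℝ) + 2) + 1) = (2*((k + 2 : ℕ):ℝ)+1) := by push_cast; ring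
  rw [← e5]
  exact final_ineq k τ hτ

end Walk

open Walk

/-- Walkington's endpoint estimate for the discrete test function: with
`λ = 1/(4(2p+1)τₙ)` and `W = Π⁰_{p-1}([1 - λ(t - t_{n-1})] U')`,
`‖U'(t_{n-1}) - W(t_{n-1})‖ ≤ λ √((2p+1)τₙ) ‖U'‖_{L²(Iₙ;X)}`. -/
theorem discrete_test_function_endpoint_estimate
    {X : Type} [NormedAddCommGroup X] [InnerProductSpace ℝ X]
    (p : ℕ) (hp : 2 ≤ p) (a b : ℝ) (hab : a < b)
    (U U' W : ℝ → X)
    (hU : IsPolyDeg p U) (hU' : ∀ t, HasDerivAt U (U' t) t)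
    (hW : IsPolyDeg (p - 1) W)
    (lam : ℝ) (hlam : lam = 1 / (4 * (2 * (p:ℝ) + 1) * (b - a)))
    (hproj : ∀ q : ℝ → X, IsPolyDeg (p - 1) q →
      ∫ t in Set.Ioc a b, (inner ℝ ((1 - lam * (t - a)) • U' t - W t) (q t) : ℝ) = 0) :
    ‖U' a - W a‖ ≤ lam * Real.sqrt ((2 * (p:ℝ) + 1) * (b - a))
        * Real.sqrt (∫ t in Set.Ioc a b, ‖U' t‖ ^ 2) := by
  classical
  open Polynomial intervalIntegral in
  have hp0 : 0 < p := by omega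
  have hp1 : p - 1 + 1 = p := by omega
  have hτ : 0 < b - a := sub_pos.2 hab
  obtain ⟨c, hc⟩ := hU
  obtain ⟨w, hw⟩ := hW
  -- coefficients of U'
  set u : ℕ → X := fun k => ((k : ℝ) + 1) • c (k + 1) with hu
  set V : ℝ → X := fun t => ∑ k ∈ Finset.range p, t ^ k • u k with hV
  have hVd : ∀ t, HasDerivAt U (V t) t := by
    intro t
    have hUfun : U = fun s => ∑ k ∈ Finset.range (p+1), s ^ k • c k := funext hc
    rw [hUfun]
    have h1 : HasDerivAt (fun s : ℝ => ∑ k ∈ Finset.range (p+1), s ^ k • c k)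
        (∑ k ∈ Finset.range (p+1), ((k : ℝ) * t ^ (k-1)) • c k) t := by
      apply HasDerivAt.fun_sum
      intro k _
      exact (hasDerivAt_pow k t).smul_const (c k)
    convert h1 using 1
    rw [hV, Finset.sum_range_succ']
    simp only [Nat.cast_zero, zero_mul, zero_smul, add_zero, Nat.cast_add, Nat.cast_one,
      Nat.add_sub_cancel]
    apply Finset.sum_congr rfl
    intro k _
    rw [hu, smul_smul]
    ring_nf
  have hU'V : ∀ t, U' t = V t := fun t => (hU' t).unique (hVd t)
  have hVcont : Continuous V :=
    continuous_finset_sum _ fun k _ => (continuous_pow k).smul continuous_const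
  -- scalarized polynomials
  set PU : X → Polynomial ℝ := fun x => ∑ k ∈ Finset.range p, Polynomial.C (inner ℝ (u k) x : ℝ) * Polynomial.X ^ k with hPU
  set PW : X → Polynomial ℝ := fun x => ∑ k ∈ Finset.range p, Polynomial.C (inner ℝ (w k) x : ℝ) * Polynomial.X ^ k with hPW
  set PD : X → Polynomial ℝ := fun x => (1 - Polynomial.C lam * (Polynomial.X - Polynomial.C a)) * PU x - PW x with hPD
  have hPUeval : ∀ (x : X) (t : ℝ), (PU x).eval t = inner ℝ (V t) x := by
    intro x t
    rw [hPU, hV]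
    simp only [Polynomial.eval_finset_sum, Polynomial.eval_mul, Polynomial.eval_C,
      Polynomial.eval_pow, Polynomial.eval_X, sum_inner, real_inner_smul_left]
    exact Finset.sum_congr rfl fun k _ => mul_comm _ _
  have hPWeval : ∀ (x : X) (t : ℝ), (PW x).eval t = inner ℝ (W t) x := by
    intro x t
    rw [hPW, hw t]
    rw [hp1]
    simp only [Polynomial.eval_finset_sum, Polynomial.eval_mul, Polynomial.eval_C,
      Polynomial.eval_pow, Polynomial.eval_X, sum_inner, real_inner_smul_left]
    exact Finset.sum_congr rfl fun k _ => mul_comm _ _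
  have hPDeval : ∀ (x : X) (t : ℝ),
      (PD x).eval t = inner ℝ ((1 - lam * (t - a)) • U' t - W t) x := by
    intro x t
    rw [hPD]
    simp only [Polynomial.eval_sub, Polynomial.eval_mul, Polynomial.eval_one, Polynomial.eval_C,
      Polynomial.eval_X, inner_sub_left, real_inner_smul_left, hPUeval, hPWeval, hU'V]
  have hPUdeg : ∀ x : X, (PU x).natDegree < p := by
    intro x
    have : (PU x).natDegree ≤ p - 1 := by
      rw [hPU]
      apply Polynomial.natDegree_sum_le_of_forall_le
      intro k hk
      have hk' := Finset.mem_range.mp hk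
      exact (Polynomial.natDegree_C_mul_le _ _).trans
        (by rw [Polynomial.natDegree_X_pow]; omega)
    omega
  have hPWdeg : ∀ x : X, (PW x).natDegree < p := by
    intro x
    have : (PW x).natDegree ≤ p - 1 := by
      rw [hPW]
      apply Polynomial.natDegree_sum_le_of_forall_le
      intro k hk
      have hk' := Finset.mem_range.mp hk
      exact (Polynomial.natDegree_C_mul_le _ _).trans
        (by rw [Polynomial.natDegree_X_pow]; omega)
    omega
  have hPDdeg : ∀ x : X, (PD x).natDegree ≤ p := by
    intro x
    rw [hPD]
    refine (Polynomial.natDegree_sub_le _ _).trans ?_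
    have h1 : ((1 - Polynomial.C lam * (Polynomial.X - Polynomial.C a)) : Polynomial ℝ).natDegree ≤ 1 := by
      refine (Polynomial.natDegree_sub_le _ _).trans ?_
      simp only [Polynomial.natDegree_one]
      have := (Polynomial.natDegree_C_mul_le lam (Polynomial.X - Polynomial.C a)).trans
        (le_of_eq (Polynomial.natDegree_X_sub_C a))
      omega
    have h2 := (Polynomial.natDegree_mul_le
      (p := (1 - Polynomial.C lam * (Polynomial.X - Polynomial.C a)) ) (q := PU x))
    have h3 := hPUdeg x
    have h4 := hPWdeg x
    omega
  have hPUcoeff : ∀ (x : X) (j : ℕ), j < p → (PU x).coeff j = inner ℝ (u j) x := by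
    intro x j hj
    rw [hPU]
    simp only [Polynomial.finset_sum_coeff, Polynomial.coeff_C_mul, Polynomial.coeff_X_pow,
      mul_ite, mul_one, mul_zero]
    simp [Finset.sum_ite_eq, Finset.sum_ite_eq', Finset.mem_range.mpr hj]
  have hPUcoeff_top : ∀ x : X, (PU x).coeff p = 0 := fun x =>
    Polynomial.coeff_eq_zero_of_natDegree_lt (hPUdeg x)
  have hPWcoeff_top : ∀ x : X, (PW x).coeff p = 0 := fun x =>
    Polynomial.coeff_eq_zero_of_natDegree_lt (hPWdeg x)
  have hPDcoeff_top : ∀ x : X, (PD x).coeff p = -(lam * inner ℝ (u (p-1)) x) := by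
    intro x
    have hrw : PD x = PU x - Polynomial.C lam * (Polynomial.X * PU x)
        + Polynomial.C lam * Polynomial.C a * PU x - PW x := by
      rw [hPD]; ring
    rw [hrw]
    have hXPU : (Polynomial.X * PU x).coeff p = (PU x).coeff (p-1) := by
      conv_lhs => rw [← hp1]
      rw [Polynomial.coeff_X_mul]
    simp only [mul_assoc, Polynomial.coeff_sub, Polynomial.coeff_add, Polynomial.coeff_C_mul,
      hXPU, hPUcoeff_top x, hPWcoeff_top x, hPUcoeff x (p-1) (by omega)]
    ring
  -- orthogonality from the projection hypothesis
  have horth : ∀ j, j < p → ∀ x : X, ∫ t in a..b, t ^ j * (PD x).eval t = 0 := by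
    intro j hj x
    have hq : IsPolyDeg (p-1) (fun t : ℝ => t ^ j • x) := by
      refine ⟨fun k => if k = j then x else 0, fun t => ?_⟩
      rw [hp1]
      have : ∀ k : ℕ, t ^ k • (if k = j then x else 0) = if k = j then t ^ j • x else 0 := by
        intro k
        split_ifs with h
        · rw [h]
        · rw [smul_zero]
      simp only [this]
      rw [Finset.sum_ite_eq' (Finset.range p) j (fun _ => t ^ j • x)]
      simp [Finset.mem_range.mpr hj]
    have h0 := hproj _ hq
    rw [← integral_of_le hab.le] at h0
    rw [← h0]
    apply integral_congr
    intro t _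
    simp only [real_inner_smul_right, ← hPDeval x t]
  -- Claim A : identification of the endpoint value
  set ρ : ℝ := ((2*p).descFactorial p : ℝ) * (-1 : ℝ)^p with hρdef
  have hρabs : |ρ| = ((2*p).descFactorial p : ℝ) := by
    rw [hρdef, abs_mul, abs_pow, abs_neg, abs_one, one_pow, mul_one, Nat.abs_cast]
  have hdFpos : (2*p).descFactorial p ≠ 0 := fun h =>
    absurd (Nat.descFactorial_eq_zero_iff_lt.mp h) (by omega)
  have hρne : ρ ≠ 0 := by
    intro h
    rw [← abs_eq_zero, hρabs] at h
    exact hdFpos (by exact_mod_cast h)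
  have hRtop : (Rod a b p).coeff p = ρ := Rod_coeff_top a b p
  have hA : ∀ x : X, (inner ℝ (U' a - W a) x : ℝ)
      = (-(lam * inner ℝ (u (p-1)) x) / ρ) * ((p.factorial : ℝ) * (b-a)^p) := by
    intro x
    set E : Polynomial ℝ := PD x - Polynomial.C ((PD x).coeff p / ρ) * Rod a b p with hEdef
    have hEcoeff : E.coeff p = 0 := by
      rw [hEdef]
      simp only [Polynomial.coeff_sub, Polynomial.coeff_C_mul, hRtop]
      field_simp
      ring
    have hEdeg : E.natDegree < p := by
      have h1 : E.natDegree ≤ p := by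
        rw [hEdef]
        refine (Polynomial.natDegree_sub_le _ _).trans ?_
        have := (Polynomial.natDegree_C_mul_le ((PD x).coeff p / ρ) (Rod a b p)).trans
          (Rod_natDegree_le a b p)
        have := hPDdeg x
        omega
      rcases lt_or_eq_of_le h1 with h | h
      · exact h
      · exfalso
        have hEne : E ≠ 0 := by
          intro h0
          rw [h0] at h
          simp only [Polynomial.natDegree_zero] at h
          omega
        have hlc : E.coeff p ≠ 0 := by
          rw [← h, Polynomial.coeff_natDegree]
          exact Polynomial.leadingCoeff_ne_zero.mpr hEne
        exact hlc hEcoeff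
    have hEorth : ∀ j, j < p → ∫ t in a..b, t ^ j * E.eval t = 0 := by
      intro j hj
      have h1 := horth j hj x
      have h2 := Rod_orth_mono a b p j hj
      have hsplit : ∫ t in a..b, t ^ j * E.eval t
          = (∫ t in a..b, t ^ j * (PD x).eval t)
            - ((PD x).coeff p / ρ) * ∫ t in a..b, t ^ j * (Rod a b p).eval t := by
        rw [← intervalIntegral.integral_const_mul, ← intervalIntegral.integral_sub]
        · apply integral_congr
          intro t _
          rw [hEdef]
          simp only [Polynomial.eval_sub, Polynomial.eval_mul, Polynomial.eval_C]
          ring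
        · exact (((continuous_pow j).mul (PD x).continuous)).intervalIntegrable a b
        · exact (continuous_const.mul ((continuous_pow j).mul
            (Rod a b p).continuous)).intervalIntegrable a b
      rw [hsplit, h1, h2, mul_zero, sub_zero]
    have hE0 : E = 0 := poly_eq_zero_of_orth a b hab p E hEdeg hEorth
    have hPDeq : PD x = Polynomial.C ((PD x).coeff p / ρ) * Rod a b p := by
      have := sub_eq_zero.mp (hEdef ▸ hE0)
      linear_combination this
    have heval : (PD x).eval a = ((PD x).coeff p / ρ) * ((p.factorial : ℝ) * (b-a)^p) := by
      conv_lhs => rw [hPDeq]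
      simp only [Polynomial.eval_mul, Polynomial.eval_C, Rod_eval_left]
    rw [hPDcoeff_top x] at heval
    rw [← heval, hPDeval x a]
    simp
  -- vector form of Claim A
  set y : X := U' a - W a with hydef2
  set κ : ℝ := -(lam * ((p.factorial : ℝ) * (b-a)^p) / ρ) with hκdef
  have hyvec : y = κ • u (p-1) := by
    have hall : ∀ x : X, (inner ℝ (y - κ • u (p-1)) x : ℝ) = 0 := by
      intro x
      rw [inner_sub_left, real_inner_smul_left]
      have := hA x
      rw [hydef2]
      rw [this]
      ring
    have := hall (y - κ • u (p-1))
    rwa [inner_self_eq_zero, sub_eq_zero] at this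
  have hynorm : ‖y‖ = |κ| * ‖u (p-1)‖ := by rw [hyvec, norm_smul, Real.norm_eq_abs]
  -- Claim B : bound on the top coefficient
  set q1 : ℕ := p - 1 with hq1def
  set S : Polynomial ℝ := Rod a b q1 with hSdef
  set ρ' : ℝ := ((2*q1).descFactorial q1 : ℝ) * (-1 : ℝ)^q1 with hρ'def
  have hρ'abs : |ρ'| = ((2*q1).descFactorial q1 : ℝ) := by
    rw [hρ'def, abs_mul, abs_pow, abs_neg, abs_one, one_pow, mul_one, Nat.abs_cast]
  have hdF'pos : (2*q1).descFactorial q1 ≠ 0 := fun h =>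
    absurd (Nat.descFactorial_eq_zero_iff_lt.mp h) (by omega)
  have hρ'ne : ρ' ≠ 0 := by
    intro h
    rw [← abs_eq_zero, hρ'abs] at h
    exact hdF'pos (by exact_mod_cast h)
  set N : ℝ := ∫ t in a..b, S.eval t ^ 2 with hNdef
  have hNval : N = ((2*q1).factorial : ℝ)
      * (q1.factorial * q1.factorial * (b - a) ^ (2*q1+1) / ((2*q1+1).factorial)) :=
    Rod_sq_integral a b q1
  have hNpos : 0 < N := by
    rw [hNval]
    positivity
  set uu : X := u (p-1) with huudef
  set I : ℝ := ∫ t in a..b, ‖V t‖ ^ 2 with hIdef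
  have hInonneg : 0 ≤ I := intervalIntegral.integral_nonneg hab.le (fun t _ => sq_nonneg _)
  have hq1p : q1 < p := by omega
  have hid : ∫ t in a..b, (PU uu).eval t * S.eval t = ((inner ℝ uu uu : ℝ) / ρ') * N := by
    set E' : Polynomial ℝ := PU uu - Polynomial.C ((inner ℝ uu uu : ℝ) / ρ') * S with hE'def
    have hS'top : S.coeff q1 = ρ' := Rod_coeff_top a b q1
    have hE'coeff : E'.coeff q1 = 0 := by
      rw [hE'def]
      simp only [Polynomial.coeff_sub, Polynomial.coeff_C_mul, hS'top,
        hPUcoeff uu q1 hq1p, huudef]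
      field_simp
      rw [hPUcoeff _ q1 hq1p, sub_self]
    have hE'deg : E'.natDegree < q1 := by
      have h1 : E'.natDegree ≤ q1 := by
        rw [hE'def]
        refine (Polynomial.natDegree_sub_le _ _).trans ?_
        have h2 := (Polynomial.natDegree_C_mul_le ((inner ℝ uu uu : ℝ) / ρ') S).trans
          ((hSdef ▸ Rod_natDegree_le a b q1))
        have h3 : (PU uu).natDegree ≤ q1 := by
          rw [hPU]
          apply Polynomial.natDegree_sum_le_of_forall_le
          intro k hk
          have hk' := Finset.mem_range.mp hk
          exact (Polynomial.natDegree_C_mul_le _ _).trans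
            (by rw [Polynomial.natDegree_X_pow]; omega)
        omega
      rcases lt_or_eq_of_le h1 with h | h
      · exact h
      · exfalso
        have hE'ne : E' ≠ 0 := by
          intro h0
          rw [h0] at h
          simp only [Polynomial.natDegree_zero] at h
          omega
        have hlc : E'.coeff q1 ≠ 0 := by
          rw [← h, Polynomial.coeff_natDegree]
          exact Polynomial.leadingCoeff_ne_zero.mpr hE'ne
        exact hlc hE'coeff
    have horthE' : ∫ t in a..b, E'.eval t * S.eval t = 0 :=
      orth_eval a b q1 E' S hE'deg (fun j hj => Rod_orth_mono a b q1 j hj)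
    have hsplit : ∫ t in a..b, E'.eval t * S.eval t
        = (∫ t in a..b, (PU uu).eval t * S.eval t)
          - ((inner ℝ uu uu : ℝ) / ρ') * ∫ t in a..b, S.eval t ^ 2 := by
      rw [← intervalIntegral.integral_const_mul, ← intervalIntegral.integral_sub]
      · apply integral_congr
        intro t _
        rw [hE'def]
        simp only [Polynomial.eval_sub, Polynomial.eval_mul, Polynomial.eval_C]
        ring
      · exact (((PU uu).continuous.mul S.continuous)).intervalIntegrable a b
      · exact (continuous_const.mul (S.continuous.pow 2)).intervalIntegrable a b
    rw [hsplit] at horthE'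
    rw [← hNdef] at horthE'
    linarith
  -- Cauchy--Schwarz chain
  set Bq : ℝ := ∫ t in a..b, ‖V t‖ * |S.eval t| with hBqdef
  have hBqnonneg : 0 ≤ Bq :=
    intervalIntegral.integral_nonneg hab.le
      (fun t _ => mul_nonneg (norm_nonneg _) (abs_nonneg _))
  have hBq1 : |((inner ℝ uu uu : ℝ) / ρ') * N| ≤ ‖uu‖ * Bq := by
    rw [← hid]
    calc |∫ t in a..b, (PU uu).eval t * S.eval t|
        ≤ ∫ t in a..b, |(PU uu).eval t * S.eval t| := abs_integral_le_integral_abs hab.le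
      _ ≤ ∫ t in a..b, ‖uu‖ * (‖V t‖ * |S.eval t|) := by
          apply intervalIntegral.integral_mono_on hab.le
          · exact ((PU uu).continuous.mul S.continuous).abs.intervalIntegrable a b
          · exact (continuous_const.mul (hVcont.norm.mul S.continuous.abs)).intervalIntegrable a b
          · intro t _
            rw [abs_mul, hPUeval uu t]
            have h1 : |(inner ℝ (V t) uu : ℝ)| ≤ ‖V t‖ * ‖uu‖ := abs_real_inner_le_norm _ _
            calc |(inner ℝ (V t) uu : ℝ)| * |S.eval t| ≤ (‖V t‖ * ‖uu‖) * |S.eval t| :=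
                mul_le_mul_of_nonneg_right h1 (abs_nonneg _)
              _ = ‖uu‖ * (‖V t‖ * |S.eval t|) := by ring
      _ = ‖uu‖ * Bq := by rw [intervalIntegral.integral_const_mul]
  have hCS : Bq ^ 2 ≤ I * N := by
    have hNeq : ∫ t in a..b, |S.eval t| ^ 2 = N := by
      rw [hNdef]
      exact integral_congr (fun t _ => sq_abs _)
    have := cauchy_schwarz_integral a b hab.le (fun t => ‖V t‖) (fun t => |S.eval t|)
      hVcont.norm S.continuous.abs (by rw [hNeq]; exact hNpos)
    rw [hNeq] at this
    exact this
  have huuN : ‖uu‖ ^ 2 * N ≤ ρ' ^ 2 * I := by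
    rcases eq_or_ne (‖uu‖) 0 with h0 | h0
    · rw [h0]
      have : (0:ℝ) ^ 2 * N = 0 := by ring
      rw [this]
      have : 0 ≤ ρ' ^ 2 * I := mul_nonneg (sq_nonneg _) hInonneg
      linarith
    · have huupos : 0 < ‖uu‖ := lt_of_le_of_ne (norm_nonneg _) (Ne.symm h0)
      have hinner : (inner ℝ uu uu : ℝ) = ‖uu‖ ^ 2 := real_inner_self_eq_norm_sq uu
      have hρ'pos : 0 < |ρ'| := abs_pos.mpr hρ'ne
      have h1 : ‖uu‖ ^ 2 * N / |ρ'| ≤ ‖uu‖ * Bq := by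
        have h2 := hBq1
        rw [hinner] at h2
        have habs : |(‖uu‖ ^ 2 / ρ') * N| = ‖uu‖ ^ 2 * N / |ρ'| := by
          rw [abs_mul, abs_div, abs_of_nonneg (sq_nonneg (‖uu‖)), abs_of_pos hNpos]
          ring
        rwa [habs] at h2
      have h2 : ‖uu‖ * N ≤ |ρ'| * Bq := by
        rw [div_le_iff₀ hρ'pos] at h1
        have h1' : ‖uu‖ * (‖uu‖ * N) ≤ ‖uu‖ * (|ρ'| * Bq) := by
          ring_nf
          ring_nf at h1
          linarith
        exact le_of_mul_le_mul_left h1' huupos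
      have h2sq : (‖uu‖ * N) ^ 2 ≤ (|ρ'| * Bq) ^ 2 := by
        apply pow_le_pow_left₀ (by positivity) h2
      have hsq : (|ρ'| * Bq) ^ 2 = ρ' ^ 2 * Bq ^ 2 := by
        rw [mul_pow, sq_abs]
      have hstep : (‖uu‖ * N) ^ 2 ≤ ρ' ^ 2 * (I * N) := by
        calc (‖uu‖ * N) ^ 2 ≤ (|ρ'| * Bq) ^ 2 := h2sq
          _ = ρ' ^ 2 * Bq ^ 2 := hsq
          _ ≤ ρ' ^ 2 * (I * N) := mul_le_mul_of_nonneg_left hCS (sq_nonneg ρ')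
      have hmul : (‖uu‖ ^ 2 * N) * N ≤ (ρ' ^ 2 * I) * N := by
        ring_nf
        ring_nf at hstep
        linarith
      exact le_of_mul_le_mul_right hmul hNpos
  -- final numeric assembly
  have hlampos : 0 < lam := by
    rw [hlam]
    have h1 : (0:ℝ) < 2 * (p:ℝ) + 1 := by positivity
    have h2 : (0:ℝ) < 4 * (2 * (p:ℝ) + 1) * (b - a) := by
      apply mul_pos (by positivity) hτ
    exact one_div_pos.mpr h2
  have hIoc : ∫ t in Set.Ioc a b, ‖U' t‖ ^ 2 = I := by
    rw [← integral_of_le hab.le, hIdef]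
    exact integral_congr (fun t _ => by rw [hU'V])
  rw [hIoc]
  have hAτ : (0:ℝ) < (p.factorial : ℝ) * (b-a)^p := by positivity
  have hρ2 : 0 < ρ ^ 2 := lt_of_le_of_ne (sq_nonneg ρ) (Ne.symm (pow_ne_zero 2 hρne))
  have hκabs : |κ| = lam * ((p.factorial : ℝ) * (b-a)^p) / |ρ| := by
    rw [hκdef, abs_neg, abs_div, abs_mul, abs_of_pos hlampos, abs_of_pos hAτ]
  have hnum : (((p.factorial : ℝ) * (b-a)^p)) ^ 2 * ρ' ^ 2
      ≤ (2*(p:ℝ)+1) * (b-a) * (ρ ^ 2 * N) := by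
    have hρ'2 : ρ' ^ 2 = (((2*q1).descFactorial q1 : ℝ)) ^ 2 := by
      rw [hρ'def, mul_pow, ← pow_mul, mul_comm q1 2, pow_mul]
      norm_num
    have hρ2' : ρ ^ 2 = (((2*p).descFactorial p : ℝ)) ^ 2 := by
      rw [hρdef, mul_pow, ← pow_mul, mul_comm p 2, pow_mul]
      norm_num
    have hfin := final_ineq' p hp (b-a) hτ
    rw [← hq1def] at hfin
    rw [← hNval] at hfin
    rw [hρ'2, hρ2']
    linarith [hfin]
  have key : (|κ| * ‖uu‖) ^ 2 ≤ lam ^ 2 * ((2*(p:ℝ)+1) * (b-a)) * I := by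
    have h1 : (|κ| * ‖uu‖) ^ 2
        = (lam ^ 2 * (((p.factorial : ℝ) * (b-a)^p)) ^ 2 / ρ ^ 2) * ‖uu‖ ^ 2 := by
      rw [hκabs, mul_pow, div_pow, mul_pow, sq_abs]
    have h2 : ‖uu‖ ^ 2 ≤ ρ' ^ 2 * I / N := (le_div_iff₀ hNpos).mpr huuN
    calc (|κ| * ‖uu‖) ^ 2
        = (lam ^ 2 * (((p.factorial : ℝ) * (b-a)^p)) ^ 2 / ρ ^ 2) * ‖uu‖ ^ 2 := h1
      _ ≤ (lam ^ 2 * (((p.factorial : ℝ) * (b-a)^p)) ^ 2 / ρ ^ 2) * (ρ' ^ 2 * I / N) :=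
          mul_le_mul_of_nonneg_left h2 (by positivity)
      _ = lam ^ 2 * (((((p.factorial : ℝ) * (b-a)^p)) ^ 2 * ρ' ^ 2) / (ρ ^ 2 * N)) * I := by
          field_simp
      _ ≤ lam ^ 2 * ((2*(p:ℝ)+1) * (b-a)) * I := by
          apply mul_le_mul_of_nonneg_right _ hInonneg
          apply mul_le_mul_of_nonneg_left _ (sq_nonneg lam)
          rw [div_le_iff₀ (by positivity)]
          linarith [hnum]
  have hfinal : ‖y‖ ≤ lam * Real.sqrt ((2*(p:ℝ)+1) * (b-a)) * Real.sqrt I := by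
    rw [hynorm]
    have h0 : (0:ℝ) ≤ |κ| * ‖u (p-1)‖ := mul_nonneg (abs_nonneg _) (norm_nonneg _)
    calc |κ| * ‖u (p-1)‖ = Real.sqrt ((|κ| * ‖u (p-1)‖) ^ 2) := (Real.sqrt_sq h0).symm
      _ ≤ Real.sqrt (lam ^ 2 * ((2*(p:ℝ)+1) * (b-a)) * I) := Real.sqrt_le_sqrt (by
          have : |κ| * ‖u (p-1)‖ = |κ| * ‖uu‖ := by rw [huudef]
          rw [this]
          exact key)
      _ = lam * Real.sqrt ((2*(p:ℝ)+1) * (b-a)) * Real.sqrt I := by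
          rw [Real.sqrt_mul (by positivity) I, Real.sqrt_mul (sq_nonneg lam),
            Real.sqrt_sq hlampos.le]
  exact hfinal
end
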